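/- arXiv:2102.10851 — 8 statements merged into one kernel-verified Lean document; each statement's English description precedes it below -/
import Mathlib

section
/- Fix a natural number s. The family of functions (G_{s,j})_{j ∈ ℤ}, where G_{s,j} : D → ℂ is defined by G_{s,j}(x) = g(x)^(s−j) · h(x)^j on the domain D = ℂ \ {0, 1, −1, i, −i}, is linearly independent over ℂ. -/
/-- `g(x) = (x + x⁻¹)/2` -/
noncomputable def g (x : ℂ) : ℂ := (x + x⁻¹) / 2

/-- `h(x) = (x - x⁻¹)/2` -/
noncomputable def h (x : ℂ) : ℂ := (x - x⁻¹) / 2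

/-- The common domain `D = ℂ \ {0, 1, -1, i, -i}`. -/
def D : Set ℂ := ({0, 1, -1, Complex.I, -Complex.I} : Set ℂ)ᶜ

namespace Aux

lemma a_ne_zero (m : ℕ) : ((m : ℂ) + 2) ≠ 0 := by
  have : ((m : ℂ) + 2) = ((m + 2 : ℕ) : ℂ) := by push_cast; ring
  rw [this]
  exact_mod_cast (by omega : m + 2 ≠ 0)

lemma sq_add_one_ne (m : ℕ) : ((m : ℂ) + 2) ^ 2 + 1 ≠ 0 := by
  have : ((m : ℂ) + 2) ^ 2 + 1 = (((m + 2) ^ 2 + 1 : ℕ) : ℂ) := by push_cast; ring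
  rw [this]
  exact_mod_cast (by positivity : (m + 2) ^ 2 + 1 ≠ 0)

lemma sq_sub_one_ne (m : ℕ) : ((m : ℂ) + 2) ^ 2 - 1 ≠ 0 := by
  have : ((m : ℂ) + 2) ^ 2 - 1 = ((m + 1 : ℕ) : ℂ) * ((m + 3 : ℕ) : ℂ) := by push_cast; ring
  rw [this]
  exact mul_ne_zero (by exact_mod_cast (by omega : m + 1 ≠ 0))
    (by exact_mod_cast (by omega : m + 3 ≠ 0))

lemma mem_D (m : ℕ) : ((m : ℂ) + 2) ∈ D := by
  simp only [D, Set.mem_compl_iff, Set.mem_insert_iff, Set.mem_singleton_iff]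
  push_neg
  refine ⟨a_ne_zero m, ?_, ?_, ?_, ?_⟩ <;>
  · intro hc
    have hre := congrArg Complex.re hc
    have him := congrArg Complex.im hc
    simp [Complex.add_re, Complex.add_im] at hre him
    try nlinarith [Nat.cast_nonneg (α := ℝ) m]

lemma g_ne (m : ℕ) : g ((m : ℂ) + 2) ≠ 0 := by
  have ha := a_ne_zero m
  have : g ((m : ℂ) + 2) = (((m : ℂ) + 2) ^ 2 + 1) / (2 * ((m : ℂ) + 2)) := by
    simp only [g]; field_simp
  rw [this]
  exact div_ne_zero (sq_add_one_ne m) (by simpa using ha)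

lemma h_ne (m : ℕ) : h ((m : ℂ) + 2) ≠ 0 := by
  have ha := a_ne_zero m
  have : h ((m : ℂ) + 2) = (((m : ℂ) + 2) ^ 2 - 1) / (2 * ((m : ℂ) + 2)) := by
    simp only [h]; field_simp
  rw [this]
  exact div_ne_zero (sq_sub_one_ne m) (by simpa using ha)

lemma t_val (m : ℕ) :
    h ((m : ℂ) + 2) / g ((m : ℂ) + 2)
      = (((m : ℂ) + 2) ^ 2 - 1) / (((m : ℂ) + 2) ^ 2 + 1) := by
  have ha := a_ne_zero m
  have h1 := sq_add_one_ne m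
  rw [div_eq_div_iff (g_ne m) h1]
  simp only [g, h]
  field_simp

lemma t_inj : Function.Injective (fun m : ℕ => h ((m : ℂ) + 2) / g ((m : ℂ) + 2)) := by
  intro m k hmk
  simp only [t_val] at hmk
  have h1 := sq_add_one_ne m
  have h2 := sq_add_one_ne k
  rw [div_eq_div_iff h1 h2] at hmk
  have hsq : ((m : ℂ) + 2) ^ 2 = ((k : ℂ) + 2) ^ 2 := by linear_combination hmk / 2
  have h3 : ((m + 2 : ℕ) ^ 2 : ℂ) = ((k + 2 : ℕ) ^ 2 : ℂ) := by push_cast; linear_combination hsq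
  have h4 : (m + 2) ^ 2 = (k + 2) ^ 2 := by exact_mod_cast h3
  nlinarith [h4]

lemma key (u v : ℂ) (hu : u ≠ 0) (hv : v ≠ 0) (s n : ℕ) (i : ℤ) :
    (v / u) ^ (i + (n : ℤ))
      = (v ^ (n : ℤ) * u ^ (-(n : ℤ) - s)) * (u ^ ((s : ℤ) - i) * v ^ i) := by
  have : (v ^ (n : ℤ) * u ^ (-(n : ℤ) - s)) * (u ^ ((s : ℤ) - i) * v ^ i)
      = (v ^ i * v ^ (n : ℤ)) * (u ^ ((s : ℤ) - i) * u ^ (-(n : ℤ) - s)) := by ring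
  rw [this, ← zpow_add₀ hv, ← zpow_add₀ hu, div_zpow]
  rw [show (s : ℤ) - i + (-(n : ℤ) - s) = -(i + n) by ring, zpow_neg, div_eq_mul_inv]

end Aux

/-- For each fixed `s`, the family `(G_{s,j})_{j ∈ ℤ}`, `G_{s,j}(x) = g(x)^(s-j) · h(x)^j`,
is linearly independent in the ℂ-vector space of functions `D → ℂ`. -/
theorem stmt1 (s : ℕ) :
    LinearIndependent ℂ
      (fun (j : ℤ) => (fun x : D => g (x : ℂ) ^ ((s : ℤ) - j) * h (x : ℂ) ^ j)) := by
  rw [linearIndependent_iff']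
  intro S c hsum j hj
  set n : ℕ := S.sup (fun i => i.natAbs) with hn
  have hnn : ∀ i ∈ S, (0 : ℤ) ≤ i + n := by
    intro i hi
    have : i.natAbs ≤ n := Finset.le_sup (f := fun i : ℤ => i.natAbs) hi
    omega
  set P : Polynomial ℂ := ∑ i ∈ S, Polynomial.C (c i) * Polynomial.X ^ (i + n).toNat with hP
  have hP0 : P = 0 := by
    apply Polynomial.eq_zero_of_infinite_isRoot
    apply Set.infinite_of_injective_forall_mem
      (f := fun m : ℕ => h ((m : ℂ) + 2) / g ((m : ℂ) + 2)) Aux.t_inj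
    intro m
    simp only [Set.mem_setOf_eq, Polynomial.IsRoot, hP, Polynomial.eval_finset_sum,
      Polynomial.eval_mul, Polynomial.eval_C, Polynomial.eval_pow, Polynomial.eval_X]
    set a : ℂ := (m : ℂ) + 2 with ha
    have hg := Aux.g_ne m
    have hh := Aux.h_ne m
    have hmem : a ∈ D := Aux.mem_D m
    have hzero : (∑ i ∈ S, c i * (g a ^ ((s : ℤ) - i) * h a ^ i)) = 0 := by
      have hx0 := congrFun hsum ⟨a, hmem⟩
      simpa [Finset.sum_apply] using hx0
    have hx : ∀ i ∈ S, c i * (h a / g a) ^ (i + (n : ℤ)).toNat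
        = (h a ^ (n : ℤ) * g a ^ (-(n : ℤ) - s)) * (c i * (g a ^ ((s : ℤ) - i) * h a ^ i)) := by
      intro i hi
      rw [← zpow_natCast (h a / g a), Int.toNat_of_nonneg (hnn i hi), Aux.key _ _ hg hh s n i]
      ring
    rw [Finset.sum_congr rfl hx, ← Finset.mul_sum, hzero, mul_zero]
  have hco := congrArg (fun Q => Polynomial.coeff Q (j + n).toNat) hP0
  simp only [hP, Polynomial.finset_sum_coeff, Polynomial.coeff_C_mul, Polynomial.coeff_X_pow,
    Polynomial.coeff_zero] at hco
  rw [Finset.sum_eq_single j] at hco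
  · simpa using hco
  · intro i hi hij
    have hne : (j + (n : ℤ)).toNat ≠ (i + (n : ℤ)).toNat := by
      have h1 := hnn i hi
      have h2 := hnn j hj
      omega
    simp [hne]
  · intro hjS; exact absurd hj hjS
end

section
/- Let T be the operator on functions ℂ → ℂ given by (T f)(x) = x · f′(x), and for natural numbers r let f^[r] denote the r-fold iterate of T applied to f. Then for all natural numbers s, r and every x ∈ ℂ with x ∉ {0, 1, −1, i, −i}: (T^[r] (fun x => g(x)^s))(x) = Σ_{j=0}^{r} A(s,r,j) · g(x)^(s−j) · h(x)^j, where the exponent s − j is an integer exponent (zpow). -/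
/-- The triangular array `A(s,r,j)`: `A(s,0,j) = δ_{j,0}` and
`A(s,r+1,j) = (s-(j-1))·A(s,r,j-1) + (j+1)·A(s,r,j+1)`. -/
def A (s : ℕ) : ℕ → ℤ → ℤ
  | 0, j => if j = 0 then 1 else 0
  | r + 1, j => ((s : ℤ) - (j - 1)) * A s r (j - 1) + (j + 1) * A s r (j + 1)

lemma A_neg (s : ℕ) : ∀ (r : ℕ) (j : ℤ), j < 0 → A s r j = 0 := by
  intro r
  induction r with
  | zero => intro j hj; rw [A, if_neg (by omega)]
  | succ r ih =>
    intro j hj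
    rw [A, ih (j-1) (by omega)]
    rcases eq_or_lt_of_le (show j + 1 ≤ 0 by omega) with hh | hh
    · rw [show j = -1 by omega]; ring
    · rw [ih (j+1) hh]; ring

lemma A_gt (s : ℕ) : ∀ (r : ℕ) (j : ℤ), (r : ℤ) < j → A s r j = 0 := by
  intro r
  induction r with
  | zero => intro j hj; rw [A, if_neg (by omega)]
  | succ r ih =>
    intro j hj
    rw [A, ih (j-1) (by push_cast at hj ⊢; omega), ih (j+1) (by push_cast at hj ⊢; omega)]
    ring

lemma g_ne {x : ℂ} (h0 : x ≠ 0) (hI : x ≠ Complex.I) (hI' : x ≠ -Complex.I) : g x ≠ 0 := by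
  intro hg
  have hx2 : x ^ 2 = -1 := by
    unfold g at hg
    field_simp at hg
    linear_combination hg
  have h2 : (x - Complex.I) * (x + Complex.I) = 0 := by
    linear_combination hx2 - Complex.I_sq
  rcases mul_eq_zero.mp h2 with hc | hc
  · exact hI (by linear_combination hc)
  · exact hI' (by linear_combination hc)

lemma h_ne {x : ℂ} (h0 : x ≠ 0) (h1 : x ≠ 1) (hm1 : x ≠ -1) : h x ≠ 0 := by
  intro hh
  have hx2 : x ^ 2 = 1 := by
    unfold h at hh
    field_simp at hh
    linear_combination hh
  have h2 : (x - 1) * (x + 1) = 0 := by linear_combination hx2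
  rcases mul_eq_zero.mp h2 with hc | hc
  · exact h1 (by linear_combination hc)
  · exact hm1 (by linear_combination hc)

lemma hasDerivAt_g {x : ℂ} (h0 : x ≠ 0) : HasDerivAt g ((1 + -(x^2)⁻¹)/2) x := by
  have : HasDerivAt (fun y : ℂ => (y + y⁻¹) / 2) ((1 + -(x^2)⁻¹)/2) x :=
    ((hasDerivAt_id' (x := x)).add (hasDerivAt_inv h0)).div_const 2
  exact this

lemma hasDerivAt_h {x : ℂ} (h0 : x ≠ 0) : HasDerivAt h ((1 - -(x^2)⁻¹)/2) x := by
  have : HasDerivAt (fun y : ℂ => (y - y⁻¹) / 2) ((1 - -(x^2)⁻¹)/2) x :=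
    ((hasDerivAt_id' (x := x)).sub (hasDerivAt_inv h0)).div_const 2
  exact this

lemma hasDerivAt_term {x : ℂ} (h0 : x ≠ 0) (hg : g x ≠ 0) (hh : h x ≠ 0) (a b : ℤ) :
    HasDerivAt (fun y => g y ^ a * h y ^ b)
      (((a : ℂ) * g x ^ (a-1) * ((1 + -(x^2)⁻¹)/2)) * h x ^ b
        + g x ^ a * ((b : ℂ) * h x ^ (b-1) * ((1 - -(x^2)⁻¹)/2))) x := by
  have hga : HasDerivAt (fun y => g y ^ a) ((a : ℂ) * g x ^ (a-1) * ((1 + -(x^2)⁻¹)/2)) x :=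
    (hasDerivAt_zpow a (g x) (Or.inl hg)).comp x (hasDerivAt_g h0)
  have hhb : HasDerivAt (fun y => h y ^ b) ((b : ℂ) * h x ^ (b-1) * ((1 - -(x^2)⁻¹)/2)) x :=
    (hasDerivAt_zpow b (h x) (Or.inl hh)).comp x (hasDerivAt_h h0)
  exact hga.mul hhb

lemma xg' {x : ℂ} (h0 : x ≠ 0) : x * ((1 + -(x^2)⁻¹)/2) = h x := by
  unfold h; field_simp; ring

lemma xh' {x : ℂ} (h0 : x ≠ 0) : x * ((1 - -(x^2)⁻¹)/2) = g x := by
  unfold g; field_simp; ring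

/-- The key sum-reindexing identity for `A`. -/
lemma sum_id (s r : ℕ) (t : ℤ → ℤ → ℂ) :
    ∑ j ∈ Finset.range (r + 2), (A s (r+1) j : ℂ) * t ((s:ℤ) - j) j
      = ∑ j ∈ Finset.range (r + 1),
          (A s r j : ℂ) *
            (((s:ℂ) - j) * t ((s:ℤ) - j - 1) ((j:ℤ) + 1)
              + (j:ℂ) * t ((s:ℤ) - j + 1) ((j:ℤ) - 1)) := by
  have expand : ∀ j : ℕ, (A s (r+1) (j:ℤ) : ℂ) * t ((s:ℤ) - j) j
      = ((s:ℂ) - ((j:ℂ) - 1)) * (A s r ((j:ℤ) - 1) : ℂ) * t ((s:ℤ) - j) j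
        + ((j:ℂ) + 1) * (A s r ((j:ℤ) + 1) : ℂ) * t ((s:ℤ) - j) j := by
    intro j
    rw [A]
    push_cast
    ring
  calc ∑ j ∈ Finset.range (r + 2), (A s (r+1) j : ℂ) * t ((s:ℤ) - j) j
      = ∑ j ∈ Finset.range (r + 2),
          (((s:ℂ) - ((j:ℂ) - 1)) * (A s r ((j:ℤ) - 1) : ℂ) * t ((s:ℤ) - j) j
            + ((j:ℂ) + 1) * (A s r ((j:ℤ) + 1) : ℂ) * t ((s:ℤ) - j) j) :=
        Finset.sum_congr rfl fun j _ => expand j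
    _ = (∑ j ∈ Finset.range (r + 2),
          ((s:ℂ) - ((j:ℂ) - 1)) * (A s r ((j:ℤ) - 1) : ℂ) * t ((s:ℤ) - j) j)
        + ∑ j ∈ Finset.range (r + 2),
          ((j:ℂ) + 1) * (A s r ((j:ℤ) + 1) : ℂ) * t ((s:ℤ) - j) j :=
        Finset.sum_add_distrib
    _ = (∑ j ∈ Finset.range (r + 1),
          (A s r j : ℂ) * (((s:ℂ) - j) * t ((s:ℤ) - j - 1) ((j:ℤ) + 1)))
        + ∑ j ∈ Finset.range (r + 1),
          (A s r j : ℂ) * ((j:ℂ) * t ((s:ℤ) - j + 1) ((j:ℤ) - 1)) := by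
        congr 1
        · rw [Finset.sum_range_succ' _ (r+1)]
          rw [show ((0:ℕ):ℤ) - 1 = -1 by norm_num]
          rw [A_neg s r (-1) (by omega)]
          push_cast
          simp only [Int.cast_zero, Nat.cast_zero, mul_zero, zero_mul, add_zero]
          refine Finset.sum_congr rfl fun k _ => ?_
          rw [show ((k:ℤ) + 1 - 1) = (k:ℤ) by ring]
          rw [show ((s:ℤ) - ((k:ℤ) + 1)) = (s:ℤ) - k - 1 by ring]
          ring
        · rw [Finset.sum_range_succ _ (r+1)]
          rw [A_gt s r (((r+1:ℕ):ℤ) + 1) (by push_cast; omega)]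
          push_cast
          simp only [Int.cast_zero, Nat.cast_zero, mul_zero, zero_mul, add_zero]
          rw [Finset.sum_range_succ _ r]
          rw [A_gt s r ((r:ℤ) + 1) (by omega)]
          simp only [Int.cast_zero, Nat.cast_zero, mul_zero, zero_mul, add_zero]
          rw [Finset.sum_range_succ' _ r]
          push_cast
          simp only [Int.cast_zero, Nat.cast_zero, mul_zero, zero_mul, add_zero]
          refine Finset.sum_congr rfl fun k _ => ?_
          rw [show ((s:ℤ) - ((k:ℤ) + 1) + 1) = (s:ℤ) - k by ring]
          rw [show ((k:ℤ) + 1 - 1) = (k:ℤ) by ring]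
          ring
    _ = _ := by
        rw [← Finset.sum_add_distrib]
        exact Finset.sum_congr rfl fun j _ => by ring

/-- With `(T f)(x) = x · f'(x)`, the iterate `T^[r]` applied to `g^s` expands as
`∑_{j=0}^r A(s,r,j) · g^(s-j) · h^j` on `ℂ \ {0, 1, -1, i, -i}`. -/
theorem stmt2 (s r : ℕ) (x : ℂ)
    (hx : x ∉ ({0, 1, -1, Complex.I, -Complex.I} : Set ℂ)) :
    ((fun f : ℂ → ℂ => fun y => y * deriv f y)^[r] (fun y => g y ^ s)) x
      = ∑ j ∈ Finset.range (r + 1),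
          (A s r j : ℂ) * g x ^ ((s : ℤ) - (j : ℤ)) * h x ^ (j : ℤ) := by
  induction r generalizing x hx with
  | zero =>
    simp [A, zpow_natCast]
  | succ r ih =>
    have hx' := hx
    simp only [Set.mem_insert_iff, Set.mem_singleton_iff, not_or] at hx'
    obtain ⟨h0, h1, hm1, hI, hmI⟩ := hx'
    have hgx := g_ne h0 hI hmI
    have hhx := h_ne h0 h1 hm1
    rw [Function.iterate_succ_apply']
    show x * deriv ((fun f : ℂ → ℂ => fun y => y * deriv f y)^[r] (fun y => g y ^ s)) x = _
    set φ : ℂ → ℂ := fun y => ∑ j ∈ Finset.range (r + 1),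
        (A s r j : ℂ) * g y ^ ((s : ℤ) - (j : ℤ)) * h y ^ (j : ℤ) with hφ
    have hopen : IsOpen ({0, 1, -1, Complex.I, -Complex.I} : Set ℂ)ᶜ :=
      (Set.Finite.isClosed (Set.toFinite _)).isOpen_compl
    have hev : ((fun f : ℂ → ℂ => fun y => y * deriv f y)^[r] (fun y => g y ^ s)) =ᶠ[nhds x] φ :=
      Filter.eventuallyEq_of_mem (hopen.mem_nhds hx) fun y hy => ih y hy
    rw [Filter.EventuallyEq.deriv_eq hev]
    have hsum : HasDerivAt φ (∑ j ∈ Finset.range (r + 1),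
        (A s r j : ℂ) *
          (((((s:ℤ) - (j:ℤ)) : ℤ) : ℂ) * g x ^ ((s:ℤ) - j - 1) * ((1 + -(x^2)⁻¹)/2) * h x ^ (j:ℤ)
            + g x ^ ((s:ℤ) - j) * (((j:ℤ) : ℂ) * h x ^ ((j:ℤ) - 1) * ((1 - -(x^2)⁻¹)/2)))) x := by
      rw [hφ]
      apply HasDerivAt.fun_sum
      intro j _
      have hterm := (hasDerivAt_term h0 hgx hhx ((s:ℤ) - j) (j:ℤ)).const_mul ((A s r j : ℂ))
      have heq : (fun y => (A s r j : ℂ) * g y ^ ((s:ℤ) - (j:ℤ)) * h y ^ (j:ℤ))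
          = fun y => (A s r j : ℂ) * (g y ^ ((s:ℤ) - (j:ℤ)) * h y ^ (j:ℤ)) := by
        funext y; ring
      rw [heq]
      convert hterm using 1
    rw [hsum.deriv, Finset.mul_sum]
    calc ∑ j ∈ Finset.range (r + 1),
          x * ((A s r j : ℂ) *
            (((((s:ℤ) - (j:ℤ)) : ℤ) : ℂ) * g x ^ ((s:ℤ) - j - 1) * ((1 + -(x^2)⁻¹)/2) * h x ^ (j:ℤ)
              + g x ^ ((s:ℤ) - j) * (((j:ℤ) : ℂ) * h x ^ ((j:ℤ) - 1) * ((1 - -(x^2)⁻¹)/2))))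
        = ∑ j ∈ Finset.range (r + 1),
            (A s r j : ℂ) *
              (((s:ℂ) - j) * (g x ^ ((s:ℤ) - j - 1) * h x ^ ((j:ℤ) + 1))
                + (j:ℂ) * (g x ^ ((s:ℤ) - j + 1) * h x ^ ((j:ℤ) - 1))) := by
          refine Finset.sum_congr rfl fun j _ => ?_
          rw [zpow_add_one₀ hhx (j:ℤ), zpow_add_one₀ hgx ((s:ℤ) - (j:ℤ))]
          rw [← xg' h0, ← xh' h0]
          push_cast
          ring
      _ = ∑ j ∈ Finset.range (r + 2),
            (A s (r+1) j : ℂ) * (g x ^ ((s:ℤ) - j) * h x ^ (j:ℤ)) :=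
          (sum_id s r (fun a b => g x ^ a * h x ^ b)).symm
      _ = _ := Finset.sum_congr rfl fun j _ => by ring
end

section
/- For all natural numbers s, r and every real number t, the r-th derivative of the function t ↦ (cosh t)^s satisfies: iteratedDeriv r (fun t => (cosh t)^s) t = Σ_{j=0}^{r} A(s,r,j) · (cosh t)^(s−j) · (sinh t)^j, where the exponent s − j is an integer exponent (zpow, legitimate since cosh t > 0 for real t). -/
lemma A_eq_zero (s : ℕ) : ∀ (r : ℕ) (j : ℤ), (j < 0 ∨ (r : ℤ) < j) → A s r j = 0 := by
  intro r
  induction r with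
  | zero =>
    intro j hj
    simp only [A, Nat.cast_zero] at *
    rw [if_neg (by omega)]
  | succ r ih =>
    intro j hj
    simp only [A]
    rcases hj with h | h
    · rcases (by omega : j + 1 = 0 ∨ j + 1 < 0) with h1 | h1
      · rw [ih (j - 1) (Or.inl (by omega)), h1]; ring
      · rw [ih (j - 1) (Or.inl (by omega)), ih (j + 1) (Or.inl h1)]; ring
    · rw [ih (j - 1) (Or.inr (by push_cast at h ⊢; omega)),
        ih (j + 1) (Or.inr (by push_cast at h ⊢; omega))]; ring

lemma hasDerivAt_term_s4 (s j : ℕ) (t : ℝ) :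
    HasDerivAt (fun u : ℝ => Real.cosh u ^ ((s : ℤ) - (j : ℤ)) * Real.sinh u ^ j)
      ((((s : ℤ) : ℝ) - (j : ℝ)) * (Real.cosh t ^ ((s : ℤ) - (j : ℤ) - 1) * Real.sinh t ^ (j + 1))
        + (j : ℝ) * (Real.cosh t ^ ((s : ℤ) - (j : ℤ) + 1) * Real.sinh t ^ (j - 1))) t := by
  have hc : HasDerivAt (fun u : ℝ => Real.cosh u ^ ((s : ℤ) - (j : ℤ)))
      ((((s : ℤ) : ℝ) - (j : ℝ)) * Real.cosh t ^ ((s : ℤ) - (j : ℤ) - 1) * Real.sinh t) t := by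
    have := (hasDerivAt_zpow ((s : ℤ) - (j : ℤ)) (Real.cosh t)
      (Or.inl (Real.cosh_pos t).ne')).comp t (Real.hasDerivAt_cosh t)
    exact this.congr_deriv (by push_cast; ring)
  have hs : HasDerivAt (fun u : ℝ => Real.sinh u ^ j)
      ((j : ℝ) * Real.sinh t ^ (j - 1) * Real.cosh t) t := by
    have := (hasDerivAt_pow j (Real.sinh t)).comp t (Real.hasDerivAt_sinh t)
    exact this
  have h := hc.mul hs
  refine h.congr_deriv ?_
  have h1 : Real.cosh t ^ ((s : ℤ) - (j : ℤ) + 1)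
      = Real.cosh t ^ ((s : ℤ) - (j : ℤ)) * Real.cosh t :=
    zpow_add_one₀ (Real.cosh_pos t).ne' _
  rw [h1, pow_succ]
  ring

/-- The `r`-th derivative of `cosh(t)^s` equals `∑_{j=0}^r A(s,r,j)·cosh(t)^(s-j)·sinh(t)^j`. -/
theorem stmt4 (s r : ℕ) (t : ℝ) :
    iteratedDeriv r (fun u : ℝ => Real.cosh u ^ s) t
      = ∑ j ∈ Finset.range (r + 1),
          (A s r j : ℝ) * Real.cosh t ^ ((s : ℤ) - (j : ℤ)) * Real.sinh t ^ j := by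
  induction r generalizing t with
  | zero =>
    simp [A, zpow_natCast]
  | succ r ih =>
    have hfun : iteratedDeriv r (fun u : ℝ => Real.cosh u ^ s)
        = fun u => ∑ j ∈ Finset.range (r + 1),
            (A s r j : ℝ) * Real.cosh u ^ ((s : ℤ) - (j : ℤ)) * Real.sinh u ^ j :=
      funext fun u => ih u
    rw [iteratedDeriv_succ, hfun]
    have H : HasDerivAt (fun u => ∑ j ∈ Finset.range (r + 1),
        (A s r j : ℝ) * Real.cosh u ^ ((s : ℤ) - (j : ℤ)) * Real.sinh u ^ j)
        (∑ j ∈ Finset.range (r + 1), (A s r j : ℝ) *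
          ((((s : ℤ) : ℝ) - (j : ℝ)) *
              (Real.cosh t ^ ((s : ℤ) - (j : ℤ) - 1) * Real.sinh t ^ (j + 1))
            + (j : ℝ) * (Real.cosh t ^ ((s : ℤ) - (j : ℤ) + 1) * Real.sinh t ^ (j - 1)))) t := by
      refine HasDerivAt.fun_sum fun j _ => ?_
      simpa [mul_assoc] using (hasDerivAt_term_s4 s j t).const_mul ((A s r j : ℝ))
    rw [H.deriv]
    -- now an algebraic identity
    set C := Real.cosh t
    set S := Real.sinh t
    set T : ℕ → ℝ := fun k => C ^ ((s : ℤ) - (k : ℤ)) * S ^ k with hT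
    have split : ∑ j ∈ Finset.range (r + 1), (A s r j : ℝ) *
          ((((s : ℤ) : ℝ) - (j : ℝ)) * (C ^ ((s : ℤ) - (j : ℤ) - 1) * S ^ (j + 1))
            + (j : ℝ) * (C ^ ((s : ℤ) - (j : ℤ) + 1) * S ^ (j - 1)))
        = (∑ j ∈ Finset.range (r + 1),
            ((((s : ℤ) - (j : ℤ)) * A s r j : ℤ) : ℝ) * T (j + 1))
          + ∑ j ∈ Finset.range (r + 1),
            (((((j : ℤ)) * A s r j : ℤ) : ℝ) * (C ^ ((s : ℤ) - (j : ℤ) + 1) * S ^ (j - 1))) := by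
      rw [← Finset.sum_add_distrib]
      refine Finset.sum_congr rfl fun j _ => ?_
      have : ((s : ℤ) - (j : ℤ) - 1) = ((s : ℤ) - ((j + 1 : ℕ) : ℤ)) := by push_cast; ring
      simp only [hT, ← this]
      push_cast
      ring
    rw [split]
    have e1 : ∑ j ∈ Finset.range (r + 1),
          ((((s : ℤ) - (j : ℤ)) * A s r j : ℤ) : ℝ) * T (j + 1)
        = ∑ k ∈ Finset.range (r + 2),
          ((((s : ℤ) - ((k : ℤ) - 1)) * A s r ((k : ℤ) - 1) : ℤ) : ℝ) * T k := by
      rw [Finset.sum_range_succ' (fun k =>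
        ((((s : ℤ) - ((k : ℤ) - 1)) * A s r ((k : ℤ) - 1) : ℤ) : ℝ) * T k) (r + 1)]
      rw [A_eq_zero s r (((0 : ℕ) : ℤ) - 1) (Or.inl (by simp))]
      simp only [mul_zero, Int.cast_zero, zero_mul, add_zero]
      refine Finset.sum_congr rfl fun j _ => ?_
      push_cast
      ring_nf
    have e2 : ∑ j ∈ Finset.range (r + 1),
          (((((j : ℤ)) * A s r j : ℤ) : ℝ) * (C ^ ((s : ℤ) - (j : ℤ) + 1) * S ^ (j - 1)))
        = ∑ k ∈ Finset.range (r + 2),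
          (((((k : ℤ) + 1)) * A s r ((k : ℤ) + 1) : ℤ) : ℝ) * T k := by
      rw [Finset.sum_range_succ' (fun j =>
        (((((j : ℤ)) * A s r j : ℤ) : ℝ) * (C ^ ((s : ℤ) - (j : ℤ) + 1) * S ^ (j - 1)))) r]
      rw [Finset.sum_range_succ (fun k =>
        (((((k : ℤ) + 1)) * A s r ((k : ℤ) + 1) : ℤ) : ℝ) * T k) (r + 1),
        Finset.sum_range_succ (fun k =>
        (((((k : ℤ) + 1)) * A s r ((k : ℤ) + 1) : ℤ) : ℝ) * T k) r]
      rw [A_eq_zero s r ((r : ℤ) + 1) (Or.inr (by omega)),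
        A_eq_zero s r (((r : ℕ) + 1 : ℕ) + 1) (Or.inr (by push_cast; omega))]
      simp only [mul_zero, Int.cast_zero, zero_mul, add_zero, Nat.cast_zero, Int.cast_zero,
        zero_mul]
      refine Finset.sum_congr rfl fun i _ => ?_
      have h1 : (s : ℤ) - ((i + 1 : ℕ) : ℤ) + 1 = (s : ℤ) - (i : ℤ) := by push_cast; ring
      simp only [hT, h1]
      push_cast
      ring_nf
    rw [e1, e2, ← Finset.sum_add_distrib]
    refine Finset.sum_congr rfl fun k _ => ?_
    show _ = (A s (r + 1) (k : ℤ) : ℝ) * C ^ ((s : ℤ) - (k : ℤ)) * S ^ k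
    simp only [A, hT]
    push_cast
    ring
end

section
/- For all natural numbers s and r, Σ_{k=0}^{s} (s choose k) · (2k − s)^r = 2^s · A(s,r,0), as an identity of integers. (Equivalently, the r-th moment of the centered binomial distribution of size s equals A(s,r,0).) -/
/-- Coefficients of `(1-x)^b`. -/
def c0 : ℕ → ℤ → ℤ
  | 0, j => if j = 0 then 1 else 0
  | b + 1, j => c0 b j - c0 b (j - 1)

/-- Coefficients of `(1+x)^a (1-x)^b`. -/
def c : ℕ → ℕ → ℤ → ℤ
  | 0, b, j => c0 b j
  | a + 1, b, j => c a b j + c a b (j - 1)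

lemma c_succ_a (a b : ℕ) (j : ℤ) : c (a+1) b j = c a b j + c a b (j-1) := rfl

lemma c_succ_b (a b : ℕ) (j : ℤ) : c a (b+1) j = c a b j - c a b (j-1) := by
  induction a generalizing j with
  | zero => rfl
  | succ a ih =>
    rw [c_succ_a, c_succ_a, c_succ_a, ih, ih]
    ring

lemma c_neg (a b : ℕ) : ∀ j : ℤ, j < 0 → c a b j = 0 := by
  induction a with
  | zero =>
    induction b with
    | zero => intro j hj; show c0 0 j = 0; rw [c0]; simp [hj.ne]
    | succ b ih =>
      intro j hj
      show c0 (b+1) j = 0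
      rw [c0, show c0 b j = c 0 b j from rfl, show c0 b (j-1) = c 0 b (j-1) from rfl,
        ih j hj, ih (j-1) (by omega)]
      ring
  | succ a ih =>
    intro j hj
    rw [c_succ_a, ih j hj, ih (j-1) (by omega)]
    ring

lemma c_zero (a b : ℕ) : c a b 0 = 1 := by
  induction a with
  | zero =>
    induction b with
    | zero => rfl
    | succ b ih =>
      show c0 (b+1) 0 = 1
      rw [c0, show c0 b 0 = c 0 b 0 from rfl, show c0 b (0-1) = c 0 b (0-1) from rfl,
        ih, c_neg 0 b (0-1) (by omega)]
      ring
  | succ a ih =>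
    rw [c_succ_a, ih, c_neg a b (0-1) (by omega)]
    ring

/-- The three-term recurrence. -/
lemma c_rec (a b : ℕ) : ∀ j : ℤ,
    ((a : ℤ) - b) * c a b j
      = (((a : ℤ) + b) - (j - 1)) * c a b (j - 1) + (j + 1) * c a b (j + 1) := by
  induction a with
  | zero =>
    induction b with
    | zero =>
      intro j
      show (0 - 0 : ℤ) * c0 0 j = _
      simp only [c0, show c 0 0 (j-1) = c0 0 (j-1) from rfl,
        show c 0 0 (j+1) = c0 0 (j+1) from rfl, show c 0 0 j = c0 0 j from rfl]
      show (0 - 0 : ℤ) * (if j = 0 then 1 else 0)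
        = ((0:ℤ) + 0 - (j-1)) * (if j - 1 = 0 then 1 else 0)
          + (j+1) * (if j + 1 = 0 then 1 else 0)
      split_ifs <;> omega
    | succ b ih =>
      intro j
      have h1 := ih j
      have h2 := ih (j - 1)
      have e : j - 1 + 1 = j := by ring
      rw [e] at h2
      rw [c_succ_b, c_succ_b, c_succ_b, show j + 1 - 1 = j from by ring]
      push_cast
      push_cast at h1 h2
      linear_combination h1 - h2
  | succ a ih =>
    intro j
    have h1 := ih j
    have h2 := ih (j - 1)
    have e : j - 1 + 1 = j := by ring
    rw [e] at h2
    rw [c_succ_a, c_succ_a, c_succ_a, show j + 1 - 1 = j from by ring]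
    push_cast
    push_cast at h1 h2
    linear_combination h1 + h2

/-- Binomial sums of the coefficients. -/
lemma sum_c (s : ℕ) : ∀ j : ℤ,
    ∑ k ∈ Finset.range (s + 1), (s.choose k : ℤ) * c k (s - k) j
      = if j = 0 then 2 ^ s else 0 := by
  induction s with
  | zero =>
    intro j
    simp [c, c0]
  | succ s ih =>
    intro j
    rw [Finset.sum_range_succ' (fun k => ((s+1).choose k : ℤ) * c k (s + 1 - k) j)]
    have step : ∀ k ∈ Finset.range (s + 1),
        (((s+1).choose (k+1) : ℤ)) * c (k+1) (s + 1 - (k+1)) j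
          = (s.choose k : ℤ) * (c k (s - k) j + c k (s - k) (j - 1))
            + (s.choose (k+1) : ℤ) * c (k+1) (s - (k+1) + 1) j := by
      intro k hk
      rw [Finset.mem_range] at hk
      have h1 : s + 1 - (k + 1) = s - k := by omega
      rw [h1, Nat.choose_succ_succ, ← c_succ_a]
      rcases Nat.lt_or_ge (k+1) (s+1) with h | h
      · have h2 : s - (k+1) + 1 = s - k := by omega
        rw [h2]
        push_cast
        ring
      · have hk1 : k + 1 = s + 1 := by omega
        have : s.choose (k+1) = 0 := by
          apply Nat.choose_eq_zero_of_lt; omega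
        rw [this, hk1]
        have h3 : s - k = 0 := by omega
        rw [h3]
        push_cast
        ring
    rw [Finset.sum_congr rfl step, Finset.sum_add_distrib]
    -- reassemble the second piece
    have reasm : ∑ k ∈ Finset.range (s+1), (s.choose (k+1) : ℤ) * c (k+1) (s - (k+1) + 1) j
          + ((s+1).choose 0 : ℤ) * c 0 (s + 1 - 0) j
        = ∑ k ∈ Finset.range (s+1), (s.choose k : ℤ) * (c k (s-k) j - c k (s-k) (j-1)) := by
      have : ∑ k ∈ Finset.range (s+1), (s.choose (k+1) : ℤ) * c (k+1) (s - (k+1) + 1) j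
            + ((s+1).choose 0 : ℤ) * c 0 (s + 1 - 0) j
          = ∑ k ∈ Finset.range (s+2), (s.choose k : ℤ) * c k (s - k + 1) j := by
        rw [Finset.sum_range_succ' (fun k => (s.choose k : ℤ) * c k (s - k + 1) j)]
        simp
      rw [this, Finset.sum_range_succ, Nat.choose_eq_zero_of_lt (by omega)]
      push_cast
      rw [zero_mul, add_zero]
      apply Finset.sum_congr rfl
      intro k hk
      rw [c_succ_b]
    rw [add_assoc, reasm, ← Finset.sum_add_distrib]
    have : ∀ k ∈ Finset.range (s+1),
        (s.choose k : ℤ) * (c k (s-k) j + c k (s-k) (j-1))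
          + (s.choose k : ℤ) * (c k (s-k) j - c k (s-k) (j-1))
        = 2 * ((s.choose k : ℤ) * c k (s-k) j) := by
      intro k _; ring
    rw [Finset.sum_congr rfl this, ← Finset.mul_sum, ih j]
    split_ifs <;> ring

lemma main (s : ℕ) : ∀ (r : ℕ) (j : ℤ),
    ∑ k ∈ Finset.range (s + 1),
        (s.choose k : ℤ) * c k (s - k) j * (2 * (k : ℤ) - s) ^ r
      = 2 ^ s * A s r j := by
  intro r
  induction r with
  | zero =>
    intro j
    simp only [pow_zero, mul_one, A]
    rw [sum_c s j]
    split_ifs <;> ring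
  | succ r ih =>
    intro j
    have key : ∀ k ∈ Finset.range (s + 1),
        (s.choose k : ℤ) * c k (s - k) j * (2 * (k : ℤ) - s) ^ (r+1)
          = ((s : ℤ) - (j - 1)) * ((s.choose k : ℤ) * c k (s-k) (j-1) * (2 * (k : ℤ) - s) ^ r)
            + (j + 1) * ((s.choose k : ℤ) * c k (s-k) (j+1) * (2 * (k : ℤ) - s) ^ r) := by
      intro k hk
      rw [Finset.mem_range] at hk
      have hks : k ≤ s := by omega
      have hc := c_rec k (s - k) j
      have ha : ((s - k : ℕ) : ℤ) = (s : ℤ) - k := by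
        push_cast [Nat.cast_sub hks]; ring
      rw [ha] at hc
      have hab : (k : ℤ) - ((s:ℤ) - k) = 2 * k - s := by ring
      have hab2 : (k : ℤ) + ((s:ℤ) - k) = s := by ring
      rw [hab, hab2] at hc
      calc (s.choose k : ℤ) * c k (s - k) j * (2 * (k : ℤ) - s) ^ (r+1)
          = (s.choose k : ℤ) * ((2 * (k : ℤ) - s) * c k (s - k) j) * (2 * (k : ℤ) - s) ^ r := by
            rw [pow_succ]; ring
        _ = (s.choose k : ℤ) * (((s:ℤ) - (j-1)) * c k (s-k) (j-1) + (j+1) * c k (s-k) (j+1))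
              * (2 * (k : ℤ) - s) ^ r := by rw [hc]
        _ = _ := by ring
    rw [Finset.sum_congr rfl key, Finset.sum_add_distrib, ← Finset.mul_sum, ← Finset.mul_sum,
      ih (j-1), ih (j+1)]
    show _ = 2^s * A s (r+1) j
    rw [A]
    ring

/-- The `r`-th moment of the centered binomial distribution of size `s` equals `A(s,r,0)`:
`∑_{k=0}^s C(s,k) · (2k-s)^r = 2^s · A(s,r,0)`. -/
theorem stmt7 (s r : ℕ) :
    ∑ k ∈ Finset.range (s + 1),
        (s.choose k : ℤ) * (2 * (k : ℤ) - (s : ℤ)) ^ r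
      = 2 ^ s * A s r 0 := by
  rw [← main s r 0]
  apply Finset.sum_congr rfl
  intro k _
  rw [c_zero]
  ring
end

section
/- For all natural numbers s, r and every natural number n with 0 ≤ n ≤ ⌊r/2⌋, the following identity holds in ℚ: A(s, r, r − 2n) = Σ_{0 ≤ k ≤ j ≤ n} (s)_{r−n−j} · (r)_{2n+k} · φ(n,j,k). -/
open Finset


/-- Auxiliary array realizing the triangular field `φ` on natural-number indices. -/
def phiN : ℕ → ℕ → ℕ → ℚ
  | 0, j, k => if j = 0 ∧ k = 0 then 1 else 0
  | n + 1, j, k =>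
    if k ≤ j ∧ j ≤ n + 1 then
      ((if _hk : k = 0 then 0 else ((n : ℚ) + 2 - (j : ℚ)) * phiN (n + 1) (j - 1) (k - 1))
        + ((k : ℚ) + 1) * phiN n j (k + 1) + phiN n j k) / (2 * ((n : ℚ) + 1) + (k : ℚ))
    else 0
termination_by n j k => (n, j)

/-- The triangular field `φ(n,j,k)` of rational numbers: `φ(n,j,k) = 0` unless
`0 ≤ k ≤ j ≤ n`, `φ(0,0,0) = 1`, and for `0 ≤ k ≤ j ≤ n` with `(n,j,k) ≠ (0,0,0)`,
`(2n+k)·φ(n,j,k) = (n-j+1)·φ(n,j-1,k-1) + (k+1)·φ(n-1,j,k+1) + φ(n-1,j,k)`. -/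
def phi (n j k : ℤ) : ℚ :=
  if 0 ≤ n ∧ 0 ≤ j ∧ 0 ≤ k then phiN n.toNat j.toNat k.toNat else 0

/-- `DS x q = (x)_q` as a rational number (auxiliary). -/
def DS (x q : ℕ) : ℚ := x.descFactorial q

lemma DS_zero {x q : ℕ} (h : x < q) : DS x q = 0 := by
  simp [DS, Nat.descFactorial_eq_zero_iff_lt.2 h]

lemma Dsucc (x m : ℕ) : DS x (m+1) = ((x:ℚ) - m) * DS x m := by
  unfold DS
  rcases lt_or_ge m x with h | h
  · rw [Nat.descFactorial_succ]
    push_cast [Nat.cast_sub h.le]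
    ring
  · rw [Nat.descFactorial_eq_zero_iff_lt.2 (Nat.lt_succ_of_le h)]
    rcases eq_or_lt_of_le h with rfl | h'
    · simp
    · rw [Nat.descFactorial_eq_zero_iff_lt.2 h']
      simp

lemma Dtop (x m : ℕ) : DS (x+1) (m+1) = ((x:ℚ)+1) * DS x m := by
  unfold DS
  rw [Nat.succ_descFactorial_succ]
  push_cast
  ring

lemma phiN_zero (n j k : ℕ) (h : ¬(k ≤ j ∧ j ≤ n)) : phiN n j k = 0 := by
  cases n with
  | zero => rw [phiN]; rw [if_neg]; omega
  | succ n => rw [phiN]; rw [if_neg h]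

lemma phiN_rec (m j k : ℕ) (hk : k ≤ j) (hj : j ≤ m + 1) :
    (2*((m:ℚ)+1)+(k:ℚ)) * phiN (m+1) j k
      = (if k = 0 then 0 else ((m : ℚ) + 2 - (j : ℚ)) * phiN (m + 1) (j - 1) (k - 1))
        + ((k : ℚ) + 1) * phiN m j (k + 1) + phiN m j k := by
  have hden : (2*((m:ℚ)+1)+(k:ℚ)) ≠ 0 := by positivity
  rw [phiN, if_pos ⟨hk, hj⟩]
  field_simp
  simp only [dite_eq_ite]

lemma Atop (s : ℕ) : ∀ r : ℕ, ∀ j : ℤ, (r:ℤ) < j → A s r j = 0 := by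
  intro r
  induction r with
  | zero => intro j hj; rw [A, if_neg (by omega)]
  | succ r ih =>
      intro j hj
      rw [A, ih (j-1) (by omega), ih (j+1) (by omega)]
      ring

/-- termwise identity C1 -/
lemma C1 (s r m j k : ℕ) (hj : j ≤ m+1) (hk : k ≤ j) :
    DS s (r-m-j) * DS (r+1) (2*m+2+k)
      = ((s:ℚ)-(r:ℚ)+2*(m:ℚ)+2) * (DS s (r-(m+1)-j) * DS r (2*m+2+k))
        + (2*((m:ℚ)+1)+(k:ℚ)) * (DS s (r-m-j) * DS r (2*m+1+k))
        - ((m:ℚ)+1-(j:ℚ)) * (DS s (r-(m+1)-j) * DS r (2*m+2+k)) := by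
  rcases le_or_gt (m+1+j) r with h | h
  · have e1 : r - m - j = (r - (m+1) - j) + 1 := by omega
    have e2 : 2*m+2+k = (2*m+1+k)+1 := by omega
    have hc : ((r - (m+1) - j : ℕ) : ℚ) = (r:ℚ) - ((m:ℚ)+1) - (j:ℚ) := by
      rw [Nat.cast_sub (by omega), Nat.cast_sub (by omega)]
      push_cast
      ring
    rw [e1, e2, Dtop, Dsucc, Dsucc, hc]
    push_cast
    ring
  · have hz2 : DS r (2*m+2+k) = 0 := DS_zero (by omega)
    rw [hz2]
    rcases lt_or_ge (r+1) (2*m+2+k) with h2 | h2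
    · rw [DS_zero (by omega : r < 2*m+1+k), DS_zero (by omega : r+1 < 2*m+2+k)]
      ring
    · have hk0 : k = 0 := by omega
      have hjm : j = m+1 := by omega
      have hrm : r = 2*m+1 := by omega
      subst hk0 hjm hrm
      have e3 : 2*m+1 - m - (m+1) = 0 := by omega
      have e4 : 2*m+2+0 = (2*m+1)+1 := by omega
      rw [e3, e4, Dtop]
      have e5 : 2*m+1+0 = 2*m+1 := by omega
      rw [e5]
      simp [DS]
      ring

/-- termwise identity C2 -/
lemma C2 (r m k : ℕ) :
    (k:ℚ) * DS r (2*m+1+(k-1)) + DS r (2*m+1+k) = ((r:ℚ)-2*(m:ℚ)) * DS r (2*m+k) := by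
  cases k with
  | zero =>
      have e : 2*m+1+0 = (2*m)+1 := by omega
      rw [e, Dsucc]
      have e2 : 2*m+0 = 2*m := by omega
      rw [e2]
      push_cast
      ring
  | succ k =>
      have e : 2*m+1+(k+1-1) = 2*m+(k+1) := by omega
      have e2 : 2*m+1+(k+1) = (2*m+(k+1))+1 := by omega
      rw [e, e2, Dsucc]
      push_cast
      ring

lemma Shift1 (L P : ℕ → ℕ → ℚ) (m : ℕ) :
    ∑ j ∈ range (m+2), ∑ k ∈ range (j+1),
        L j k * (if k = 0 then 0 else ((m:ℚ)+2-(j:ℚ)) * P (j-1) (k-1))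
      = ∑ j ∈ range (m+2), ∑ k ∈ range (j+1),
          ((m:ℚ)+1-(j:ℚ)) * L (j+1) (k+1) * P j k := by
  have hin : ∀ j : ℕ, ∑ k ∈ range (j+1),
      L j k * (if k = 0 then 0 else ((m:ℚ)+2-(j:ℚ)) * P (j-1) (k-1))
      = ∑ k ∈ range j, L j (k+1) * (((m:ℚ)+2-(j:ℚ)) * P (j-1) k) := by
    intro j
    rw [Finset.sum_range_succ']
    simp
  rw [Finset.sum_congr rfl (fun j _ => hin j)]
  rw [Finset.sum_range_succ']
  simp only [range_zero, sum_empty, add_zero]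
  have hlast : ∑ k ∈ range ((m+1)+1), ((m:ℚ)+1-((m+1:ℕ):ℚ)) * L ((m+1)+1) (k+1) * P (m+1) k = 0 := by
    apply Finset.sum_eq_zero
    intro k _
    have : ((m:ℚ)+1-((m+1:ℕ):ℚ)) = 0 := by push_cast; ring
    rw [this, zero_mul, zero_mul]
  conv_rhs => rw [show m+2 = (m+1)+1 from rfl, Finset.sum_range_succ]
  rw [hlast, add_zero]
  apply Finset.sum_congr rfl
  intro j _
  apply Finset.sum_congr rfl
  intro k _
  have : (j+1-1) = j := by omega
  rw [this]
  push_cast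
  ring

lemma Shift2 (L P : ℕ → ℕ → ℚ) (m : ℕ) (hP : ∀ j k, j < k → P j k = 0) :
    ∑ j ∈ range (m+2), ∑ k ∈ range (j+1), L j k * (((k:ℚ)+1) * P j (k+1))
      = ∑ j ∈ range (m+2), ∑ k ∈ range (j+1), (k:ℚ) * L j (k-1) * P j k := by
  apply Finset.sum_congr rfl
  intro j _
  have h1 : ∑ k ∈ range (j+1), L j k * (((k:ℚ)+1) * P j (k+1))
      = ∑ k ∈ range (j+1), (fun k : ℕ => (k:ℚ) * L j (k-1) * P j k) (k+1) := by
    apply Finset.sum_congr rfl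
    intro k _
    simp only [Nat.add_sub_cancel]
    push_cast
    ring
  rw [h1]
  have h2 := Finset.sum_range_succ' (fun k : ℕ => (k:ℚ) * L j (k-1) * P j k) (j+1)
  rw [Finset.sum_range_succ] at h2
  simp only [Nat.cast_zero, zero_mul] at h2
  rw [hP j (j+1) (by omega)] at h2
  simp only [mul_zero, add_zero] at h2
  exact h2.symm

lemma stepSum (s r m : ℕ) :
    ∑ j ∈ range (m+2), ∑ k ∈ range (j+1),
        DS s (r-m-j) * DS (r+1) (2*m+2+k) * phiN (m+1) j k
      = ((s:ℚ)-(r:ℚ)+2*(m:ℚ)+2) *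
          ∑ j ∈ range (m+2), ∑ k ∈ range (j+1),
            DS s (r-(m+1)-j) * DS r (2*m+2+k) * phiN (m+1) j k
        + ((r:ℚ)-2*(m:ℚ)) *
          ∑ j ∈ range (m+1), ∑ k ∈ range (j+1),
            DS s (r-m-j) * DS r (2*m+k) * phiN m j k := by
  set L : ℕ → ℕ → ℚ := fun j k => DS s (r-m-j) * DS r (2*m+1+k) with hL
  have tw : ∀ j ∈ range (m+2), ∀ k ∈ range (j+1),
      DS s (r-m-j) * DS (r+1) (2*m+2+k) * phiN (m+1) j k
        = ((s:ℚ)-(r:ℚ)+2*(m:ℚ)+2) * (DS s (r-(m+1)-j) * DS r (2*m+2+k) * phiN (m+1) j k)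
          + (L j k * (if k = 0 then 0 else ((m:ℚ)+2-(j:ℚ)) * phiN (m+1) (j-1) (k-1))
             + L j k * (((k:ℚ)+1) * phiN m j (k+1))
             + L j k * phiN m j k
             - ((m:ℚ)+1-(j:ℚ)) * L (j+1) (k+1) * phiN (m+1) j k) := by
    intro j hj k hk
    rw [mem_range] at hj hk
    have hc1 := C1 s r m j k (by omega) (by omega)
    have hrec := phiN_rec m j k (by omega) (by omega)
    have hL' : L (j+1) (k+1) = DS s (r-(m+1)-j) * DS r (2*m+2+k) := by
      rw [hL]
      simp only
      rw [show r-m-(j+1) = r-(m+1)-j by omega, show 2*m+1+(k+1) = 2*m+2+k by omega]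
    calc DS s (r-m-j) * DS (r+1) (2*m+2+k) * phiN (m+1) j k
        = (((s:ℚ)-(r:ℚ)+2*(m:ℚ)+2) * (DS s (r-(m+1)-j) * DS r (2*m+2+k))
            + (2*((m:ℚ)+1)+(k:ℚ)) * (DS s (r-m-j) * DS r (2*m+1+k))
            - ((m:ℚ)+1-(j:ℚ)) * (DS s (r-(m+1)-j) * DS r (2*m+2+k))) * phiN (m+1) j k := by
          rw [← hc1]
      _ = ((s:ℚ)-(r:ℚ)+2*(m:ℚ)+2) * (DS s (r-(m+1)-j) * DS r (2*m+2+k) * phiN (m+1) j k)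
          + L j k * ((2*((m:ℚ)+1)+(k:ℚ)) * phiN (m+1) j k)
          - ((m:ℚ)+1-(j:ℚ)) * L (j+1) (k+1) * phiN (m+1) j k := by
          rw [hL']; simp only [hL]; ring
      _ = _ := by rw [hrec]; ring
  rw [Finset.sum_congr rfl (fun j hj => Finset.sum_congr rfl (fun k hk => tw j hj k hk))]
  simp only [Finset.sum_add_distrib, Finset.sum_sub_distrib, ← Finset.mul_sum]
  rw [Shift1 L (phiN (m+1)) m]
  have hP0 : ∀ j k, j < k → phiN m j k = 0 := fun j k h => phiN_zero m j k (by omega)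
  rw [Shift2 L (phiN m) m hP0]
  have hmid : ∑ j ∈ range (m+2), ∑ k ∈ range (j+1), (k:ℚ) * L j (k-1) * phiN m j k
      + ∑ j ∈ range (m+2), ∑ k ∈ range (j+1), L j k * phiN m j k
      = ((r:ℚ)-2*(m:ℚ)) * ∑ j ∈ range (m+2), ∑ k ∈ range (j+1),
          DS s (r-m-j) * DS r (2*m+k) * phiN m j k := by
    rw [← Finset.sum_add_distrib]
    rw [Finset.mul_sum]
    apply Finset.sum_congr rfl
    intro j _
    rw [← Finset.sum_add_distrib, Finset.mul_sum]
    apply Finset.sum_congr rfl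
    intro k _
    have hc2 := C2 r m k
    calc (k:ℚ) * L j (k-1) * phiN m j k + L j k * phiN m j k
        = (((k:ℚ) * DS r (2*m+1+(k-1)) + DS r (2*m+1+k)) * DS s (r-m-j)) * phiN m j k := by
          simp only [hL]; ring
      _ = _ := by rw [hc2]; ring
  have hdrop : ∑ j ∈ range (m+2), ∑ k ∈ range (j+1),
      DS s (r-m-j) * DS r (2*m+k) * phiN m j k
      = ∑ j ∈ range (m+1), ∑ k ∈ range (j+1),
          DS s (r-m-j) * DS r (2*m+k) * phiN m j k := by
    rw [show m+2 = (m+1)+1 from rfl, Finset.sum_range_succ]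
    have : ∑ k ∈ range ((m+1)+1), DS s (r-m-(m+1)) * DS r (2*m+k) * phiN m (m+1) k = 0 := by
      apply Finset.sum_eq_zero
      intro k _
      rw [phiN_zero m (m+1) k (by omega), mul_zero]
    rw [this, add_zero]
  rw [← hdrop]
  linarith [hmid]

lemma key (s : ℕ) : ∀ r n : ℕ, ((A s r ((r:ℤ) - 2*(n:ℤ))) : ℚ)
    = ∑ j ∈ range (n+1), ∑ k ∈ range (j+1),
        DS s (r-n-j) * DS r (2*n+k) * phiN n j k := by
  intro r
  induction r with
  | zero =>
      intro n
      cases n with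
      | zero => norm_num [A, phiN, DS]
      | succ m =>
          rw [A, if_neg (by push_cast; omega)]
          rw [Finset.sum_eq_zero]
          · simp
          intro j _
          rw [Finset.sum_eq_zero]
          intro k _
          rw [DS_zero (show 0 < 2*(m+1)+k by omega)]
          ring
  | succ r ih =>
      intro n
      cases n with
      | zero =>
          have hAtop : A s r ((r:ℤ)+2) = 0 := Atop s r _ (by omega)
          have h0 := ih 0
          have hj0 : ((r:ℤ)) - 2*((0:ℕ):ℤ) = (r:ℤ) := by push_cast; ring
          rw [hj0] at h0
          have hju : ((r+1:ℕ):ℤ) - 2*((0:ℕ):ℤ) = (r:ℤ)+1 := by push_cast; ring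
          rw [hju, A]
          have e1 : (r:ℤ)+1-1 = (r:ℤ) := by ring
          have e2 : (r:ℤ)+1+1 = (r:ℤ)+2 := by ring
          rw [e1, e2, hAtop]
          push_cast
          rw [h0]
          have hphi : phiN 0 0 0 = 1 := by norm_num [phiN]
          have hD0 : ∀ x : ℕ, DS x 0 = 1 := by intro x; simp [DS]
          simp only [Finset.sum_range_one, Nat.sub_zero, Nat.mul_zero, Nat.add_zero,
            Nat.zero_add, Nat.add_sub_cancel, hphi, hD0, mul_one, mul_zero, add_zero]
          rw [Dsucc s r]

      | succ m =>
          have h1 := ih (m+1)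
          have h2 := ih m
          have hj1 : ((r+1:ℕ):ℤ) - 2*(((m+1):ℕ):ℤ) - 1 = (r:ℤ) - 2*(((m+1):ℕ):ℤ) := by
            push_cast; ring
          have hj2 : ((r+1:ℕ):ℤ) - 2*(((m+1):ℕ):ℤ) + 1 = (r:ℤ) - 2*((m:ℕ):ℤ) := by
            push_cast; ring
          rw [A, hj1, hj2]
          push_cast only
          push_cast only at h1 h2
          rw [Int.cast_add, Int.cast_mul, Int.cast_mul]
          rw [h1, h2]
          have eL : ∑ j ∈ range (m+1+1), ∑ k ∈ range (j+1),
              DS s (r+1-(m+1)-j) * DS (r+1) (2*(m+1)+k) * phiN (m+1) j k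
              = ∑ j ∈ range (m+2), ∑ k ∈ range (j+1),
                  DS s (r-m-j) * DS (r+1) (2*m+2+k) * phiN (m+1) j k := by
            apply Finset.sum_congr rfl
            intro j _
            apply Finset.sum_congr rfl
            intro k _
            rw [show r+1-(m+1)-j = r-m-j by omega, show 2*(m+1)+k = 2*m+2+k by omega]
          have eR1 : ∑ j ∈ range (m+1+1), ∑ k ∈ range (j+1),
              DS s (r-(m+1)-j) * DS r (2*(m+1)+k) * phiN (m+1) j k
              = ∑ j ∈ range (m+2), ∑ k ∈ range (j+1),
                  DS s (r-(m+1)-j) * DS r (2*m+2+k) * phiN (m+1) j k := by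
            apply Finset.sum_congr rfl
            intro j _
            apply Finset.sum_congr rfl
            intro k _
            rw [show 2*(m+1)+k = 2*m+2+k by omega]
          rw [eL, eR1, stepSum s r m]
          push_cast
          ring

/-- Expansion of the condensed array `B(s,r,n) = A(s,r,r-2n)` in terms of falling factorials:
`A(s,r,r-2n) = ∑_{0 ≤ k ≤ j ≤ n} (s)_{r-n-j} · (r)_{2n+k} · φ(n,j,k)`. -/
theorem stmt8 (s r n : ℕ) (hn : n ≤ r / 2) :
    (A s r ((r : ℤ) - 2 * (n : ℤ)) : ℚ)
      = ∑ j ∈ Finset.range (n + 1), ∑ k ∈ Finset.range (j + 1),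
          (s.descFactorial (r - n - j) : ℚ) * (r.descFactorial (2 * n + k) : ℚ)
            * phi (n : ℤ) (j : ℤ) (k : ℤ) := by
  have h := key s r n
  rw [h]
  apply Finset.sum_congr rfl
  intro j _
  apply Finset.sum_congr rfl
  intro k _
  have : phi (n:ℤ) (j:ℤ) (k:ℤ) = phiN n j k := by
    rw [phi, if_pos ⟨Int.natCast_nonneg n, Int.natCast_nonneg j, Int.natCast_nonneg k⟩]
    simp
  rw [this]
  rfl
end

section
/- For all natural numbers s and r, the following identity holds in ℚ: Σ_{i=0}^{r} (s)_{r−i} · Σ_{j≥0} (r)_j · ( Σ_{n≥0} φ(n, i−n, j−2n) ) = s^r, where all inner sums are finite since φ vanishes outside 0 ≤ k ≤ j ≤ n. -/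
lemma phiN_eq_zero {n j k : ℕ} (h : ¬(k ≤ j ∧ j ≤ n)) : phiN n j k = 0 := by
  match n with
  | 0 =>
    rw [phiN]
    split
    · omega
    · rfl
  | n + 1 =>
    rw [phiN]
    split
    · omega
    · rfl

lemma phi_natCast (a b c : ℕ) : phi a b c = phiN a b c := by simp [phi]

lemma phi_eq_zero {n j k : ℤ} (h : ¬(0 ≤ k ∧ k ≤ j ∧ j ≤ n)) : phi n j k = 0 := by
  unfold phi
  split
  · next h2 => apply phiN_eq_zero; omega
  · rfl


lemma phi_rec (n j k : ℤ) :
    (2 * (n : ℚ) + (k : ℚ)) * phi n j k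
      = ((n : ℚ) - (j : ℚ) + 1) * phi n (j - 1) (k - 1)
        + ((k : ℚ) + 1) * phi (n - 1) j (k + 1) + phi (n - 1) j k := by
  by_cases h : 0 ≤ k ∧ k ≤ j ∧ j ≤ n
  · obtain ⟨hk, hkj, hkn⟩ := h
    obtain ⟨c, rfl⟩ := Int.eq_ofNat_of_zero_le hk
    obtain ⟨b, rfl⟩ := Int.eq_ofNat_of_zero_le (le_trans hk hkj)
    obtain ⟨a, rfl⟩ := Int.eq_ofNat_of_zero_le (show (0:ℤ) ≤ n by omega)
    have hcb : c ≤ b := by exact_mod_cast hkj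
    have hba : b ≤ a := by exact_mod_cast hkn
    rcases a with _ | a'
    · have hb0 : b = 0 := by omega
      have hc0 : c = 0 := by omega
      subst hb0; subst hc0
      simp only [Nat.cast_zero]
      rw [phi_eq_zero (show ¬(0 ≤ (0:ℤ)-1 ∧ (0:ℤ)-1 ≤ (0:ℤ)-1 ∧ (0:ℤ)-1 ≤ 0) by omega),
          phi_eq_zero (show ¬(0 ≤ (0:ℤ)+1 ∧ (0:ℤ)+1 ≤ 0 ∧ (0:ℤ) ≤ (0:ℤ)-1) by omega),
          phi_eq_zero (show ¬(0 ≤ (0:ℤ) ∧ (0:ℤ) ≤ 0 ∧ (0:ℤ) ≤ (0:ℤ)-1) by omega)]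
      ring
    · have hD : 2 * ((a' : ℚ) + 1) + ((c : ℕ) : ℚ) ≠ 0 := by positivity
      have e1 : ((a' + 1 : ℕ) : ℤ) - 1 = (a' : ℤ) := by omega
      rcases c with _ | c'
      · rw [phi_eq_zero (show ¬(0 ≤ (((0:ℕ):ℤ))-1 ∧ (((0:ℕ):ℤ))-1 ≤ (b:ℤ)-1 ∧ (b:ℤ)-1 ≤ ((a'+1:ℕ):ℤ)) by omega)]
        have e2 : ((0 : ℕ) : ℤ) + 1 = ((1 : ℕ) : ℤ) := by omega
        rw [e1, e2, phi_natCast, phi_natCast, phi_natCast]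
        have hphiN : phiN (a'+1) b 0 * (2*((a':ℚ)+1) + ((0:ℕ):ℚ))
            = (0:ℚ) + (((0:ℕ):ℚ)+1) * phiN a' b (0+1) + phiN a' b 0 := by
          rw [phiN, if_pos ⟨Nat.zero_le _, hba⟩, dif_pos rfl, div_mul_cancel₀ _ hD]
        push_cast at hphiN ⊢
        linear_combination hphiN
      · rcases b with _ | b'
        · omega
        · have e2 : ((b' + 1 : ℕ) : ℤ) - 1 = (b' : ℤ) := by omega
          have e3 : ((c' + 1 : ℕ) : ℤ) - 1 = (c' : ℤ) := by omega
          have e4 : ((c' + 1 : ℕ) : ℤ) + 1 = ((c' + 2 : ℕ) : ℤ) := by omega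
          rw [e1, e2, e3, e4, phi_natCast, phi_natCast, phi_natCast, phi_natCast]
          have hphiN : phiN (a'+1) (b'+1) (c'+1) * (2*((a':ℚ)+1) + ((c'+1:ℕ):ℚ))
              = ((a':ℚ)+2 - ((b'+1:ℕ):ℚ)) * phiN (a'+1) ((b'+1)-1) ((c'+1)-1)
                + (((c'+1:ℕ):ℚ)+1) * phiN a' (b'+1) ((c'+1)+1) + phiN a' (b'+1) (c'+1) := by
            rw [phiN, if_pos ⟨hcb, hba⟩, dif_neg (Nat.succ_ne_zero c'), div_mul_cancel₀ _ hD]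
          simp only [Nat.add_sub_cancel] at hphiN
          push_cast at hphiN ⊢
          linear_combination hphiN
  · rw [phi_eq_zero h, mul_zero]
    by_cases h1 : 0 ≤ k - 1 ∧ k - 1 ≤ j - 1 ∧ j - 1 ≤ n
    · have hj : j = n + 1 := by omega
      have h2 : phi (n-1) j (k+1) = 0 := phi_eq_zero (by omega)
      have h3 : phi (n-1) j k = 0 := phi_eq_zero (by omega)
      rw [h2, h3, hj]
      push_cast
      ring
    · rw [phi_eq_zero h1, mul_zero]
      by_cases h2 : 0 ≤ k + 1 ∧ k + 1 ≤ j ∧ j ≤ n - 1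
      · have hk : k = -1 := by omega
        have h3 : phi (n-1) j k = 0 := phi_eq_zero (by omega)
        rw [h3, hk]
        push_cast
        ring
      · rw [phi_eq_zero h2, mul_zero]
        rw [phi_eq_zero (show ¬(0 ≤ k ∧ k ≤ j ∧ j ≤ n - 1) by omega)]
        ring

def cc (i : ℕ) (j : ℤ) : ℚ :=
  ∑ n ∈ Finset.range (i + 1), phi (n : ℤ) ((i : ℤ) - (n : ℤ)) (j - 2 * (n : ℤ))

def TT (r i : ℕ) : ℚ :=
  ∑ j ∈ Finset.range (r + 1), (r.descFactorial j : ℚ) * cc i (j : ℤ)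

lemma cc_eq_zero_of_lt {i : ℕ} {j : ℤ} (h : j < (i : ℤ)) : cc i j = 0 := by
  apply Finset.sum_eq_zero
  intro n hn
  exact phi_eq_zero (by omega)

lemma cc_neg {i : ℕ} {j : ℤ} (h : j < 0) : cc i j = 0 := by
  apply Finset.sum_eq_zero
  intro n hn
  exact phi_eq_zero (by omega)

lemma cc_zero_zero : cc 0 0 = 1 := by
  simp [cc, phi, phiN]

lemma cc_zero_ne {j : ℕ} (h : j ≠ 0) : cc 0 (j : ℤ) = 0 := by
  simp [cc, phi, phiN, h]

lemma phi_rec' (n i : ℕ) (j : ℤ) :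
    ((j : ℚ) + 1) * phi (n : ℤ) ((i : ℤ) + 1 - n) (j + 1 - 2 * n)
      = (2 * (n : ℚ) - i) * phi (n : ℤ) ((i : ℤ) - n) (j - 2 * n)
        + ((j : ℚ) + 2 - 2 * n) * phi ((n : ℤ) - 1) ((i : ℤ) + 1 - n) (j + 2 - 2 * n)
        + phi ((n : ℤ) - 1) ((i : ℤ) + 1 - n) (j + 1 - 2 * n) := by
  have h := phi_rec (n : ℤ) ((i : ℤ) + 1 - (n : ℤ)) (j + 1 - 2 * (n : ℤ))
  have e1 : (i:ℤ) + 1 - (n:ℤ) - 1 = (i:ℤ) - n := by ring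
  have e2 : j + 1 - 2*(n:ℤ) - 1 = j - 2*n := by ring
  have e3 : j + 1 - 2*(n:ℤ) + 1 = j + 2 - 2*n := by ring
  rw [e1, e2, e3] at h
  push_cast at h
  linear_combination h

lemma cc_rec (i : ℕ) (j : ℤ) :
    ((j : ℚ) + 1) * cc (i + 1) (j + 1) = cc i (j - 1) + ((j : ℚ) - i) * cc i j := by
  have lhs_eq : ((j : ℚ) + 1) * cc (i + 1) (j + 1)
      = ∑ n ∈ Finset.range (i + 2),
          ((j : ℚ) + 1) * phi (n : ℤ) ((i : ℤ) + 1 - n) (j + 1 - 2 * n) := by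
    rw [cc, Finset.mul_sum]
    apply Finset.sum_congr rfl
    intro n _
    have e : ((i + 1 : ℕ) : ℤ) - (n : ℤ) = (i : ℤ) + 1 - n := by push_cast; ring
    rw [e]
  rw [lhs_eq]
  rw [Finset.sum_congr rfl (fun n _ => phi_rec' n i j)]
  rw [Finset.sum_add_distrib, Finset.sum_add_distrib]
  have S1 : ∑ n ∈ Finset.range (i + 2),
      (2 * (n : ℚ) - i) * phi (n : ℤ) ((i : ℤ) - n) (j - 2 * n)
      = ∑ n ∈ Finset.range (i + 1),
        (2 * (n : ℚ) - i) * phi (n : ℤ) ((i : ℤ) - n) (j - 2 * n) := by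
    rw [Finset.sum_range_succ, phi_eq_zero (show ¬(0 ≤ j - 2*((i+1:ℕ):ℤ) ∧ j - 2*((i+1:ℕ):ℤ) ≤ (i:ℤ) - ((i+1:ℕ):ℤ) ∧ (i:ℤ) - ((i+1:ℕ):ℤ) ≤ ((i+1:ℕ):ℤ)) by omega), mul_zero, add_zero]
  have S2 : ∑ n ∈ Finset.range (i + 2),
      ((j : ℚ) + 2 - 2 * n) * phi ((n : ℤ) - 1) ((i : ℤ) + 1 - n) (j + 2 - 2 * n)
      = ∑ n ∈ Finset.range (i + 1),
        ((j : ℚ) - 2 * n) * phi (n : ℤ) ((i : ℤ) - n) (j - 2 * n) := by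
    rw [Finset.sum_range_succ']
    rw [phi_eq_zero (show ¬(0 ≤ j + 2 - 2*((0:ℕ):ℤ) ∧ j + 2 - 2*((0:ℕ):ℤ) ≤ (i:ℤ) + 1 - ((0:ℕ):ℤ) ∧ (i:ℤ) + 1 - ((0:ℕ):ℤ) ≤ ((0:ℕ):ℤ) - 1) by omega), mul_zero, add_zero]
    apply Finset.sum_congr rfl
    intro n _
    have a1 : ((n + 1 : ℕ) : ℤ) - 1 = (n : ℤ) := by omega
    have a2 : (i : ℤ) + 1 - ((n + 1 : ℕ) : ℤ) = (i : ℤ) - n := by push_cast; ring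
    have a3 : j + 2 - 2 * ((n + 1 : ℕ) : ℤ) = j - 2 * n := by push_cast; ring
    rw [a1, a2, a3]
    push_cast
    ring
  have S3 : ∑ n ∈ Finset.range (i + 2),
      phi ((n : ℤ) - 1) ((i : ℤ) + 1 - n) (j + 1 - 2 * n)
      = cc i (j - 1) := by
    rw [Finset.sum_range_succ']
    rw [phi_eq_zero (show ¬(0 ≤ j + 1 - 2*((0:ℕ):ℤ) ∧ j + 1 - 2*((0:ℕ):ℤ) ≤ (i:ℤ) + 1 - ((0:ℕ):ℤ) ∧ (i:ℤ) + 1 - ((0:ℕ):ℤ) ≤ ((0:ℕ):ℤ) - 1) by omega), add_zero]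
    apply Finset.sum_congr rfl
    intro n _
    have a1 : ((n + 1 : ℕ) : ℤ) - 1 = (n : ℤ) := by omega
    have a2 : (i : ℤ) + 1 - ((n + 1 : ℕ) : ℤ) = (i : ℤ) - n := by push_cast; ring
    have a3 : j + 1 - 2 * ((n + 1 : ℕ) : ℤ) = j - 1 - 2 * n := by push_cast; ring
    rw [a1, a2, a3]
  rw [S1, S2, S3]
  have hcc : ((j : ℚ) - i) * cc i j
      = ∑ n ∈ Finset.range (i + 1), ((j : ℚ) - i) * phi (n : ℤ) ((i : ℤ) - n) (j - 2 * n) := by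
    rw [cc, Finset.mul_sum]
  have hAB : (∑ n ∈ Finset.range (i + 1), (2 * (n : ℚ) - i) * phi (n : ℤ) ((i : ℤ) - n) (j - 2 * n))
      + (∑ n ∈ Finset.range (i + 1), ((j : ℚ) - 2 * n) * phi (n : ℤ) ((i : ℤ) - n) (j - 2 * n))
      = ∑ n ∈ Finset.range (i + 1), ((j : ℚ) - i) * phi (n : ℤ) ((i : ℤ) - n) (j - 2 * n) := by
    rw [← Finset.sum_add_distrib]
    apply Finset.sum_congr rfl
    intro n _
    ring
  rw [hcc]
  linear_combination hAB

lemma desc_succ (s k : ℕ) :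
    (s.descFactorial (k + 1) : ℚ) = ((s : ℚ) - k) * s.descFactorial k := by
  rcases lt_or_ge k s with h | h
  · rw [Nat.descFactorial_succ, Nat.cast_mul, Nat.cast_sub h.le]
  · have h1 : s.descFactorial (k + 1) = 0 := by
      rw [Nat.descFactorial_eq_zero_iff_lt]; omega
    rcases eq_or_lt_of_le h with rfl | h2
    · simp
    · have h3 : s.descFactorial k = 0 := by
        rw [Nat.descFactorial_eq_zero_iff_lt]; omega
      rw [h1, h3]
      simp

lemma desc_first (r j : ℕ) :
    ((r + 1).descFactorial (j + 1) : ℚ)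
      = (r.descFactorial (j + 1) : ℚ) + ((j : ℚ) + 1) * r.descFactorial j := by
  rw [Nat.succ_descFactorial_succ, desc_succ]
  push_cast
  ring

lemma TT_zero (r : ℕ) : TT r 0 = 1 := by
  rw [TT, Finset.sum_eq_single 0]
  · norm_num [cc_zero_zero]
  · intro j _ hj
    rw [cc_zero_ne hj, mul_zero]
  · intro h
    simp at h

lemma TT_eq_zero {r i : ℕ} (h : r < i) : TT r i = 0 := by
  apply Finset.sum_eq_zero
  intro j hj
  rw [Finset.mem_range] at hj
  rw [cc_eq_zero_of_lt (by exact_mod_cast (show j < i by omega)), mul_zero]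

lemma TT_rec (r i : ℕ) : TT (r + 1) (i + 1) = ((r : ℚ) - i) * TT r i + TT r (i + 1) := by
  rw [TT, Finset.sum_range_succ']
  have h0 : ((r+1).descFactorial 0 : ℚ) * cc (i+1) ((0:ℕ) : ℤ) = 0 := by
    rw [cc_eq_zero_of_lt (by exact_mod_cast Nat.succ_pos i), mul_zero]
  rw [h0, add_zero]
  have step : ∀ j ∈ Finset.range (r + 1),
      ((r+1).descFactorial (j+1) : ℚ) * cc (i+1) ((j+1 : ℕ) : ℤ)
        = ((r.descFactorial (j+1) : ℚ) * cc (i+1) ((j+1 : ℕ) : ℤ))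
          + ((r.descFactorial j : ℚ) * cc i ((j:ℤ) - 1)
            + ((j:ℚ) - i) * ((r.descFactorial j : ℚ) * cc i (j : ℤ))) := by
    intro j _
    have e : ((j + 1 : ℕ) : ℤ) = (j : ℤ) + 1 := by push_cast; ring
    rw [desc_first, e]
    have hc := cc_rec i (j : ℤ)
    -- ((j:ℚ)+1) * cc (i+1) ((j:ℤ)+1) = cc i (j-1) + ((j:ℚ) - i) * cc i j
    linear_combination (r.descFactorial (j+1) : ℚ) * cc (i+1) ((j:ℤ)+1) * 0
      + (r.descFactorial j : ℚ) * hc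
  rw [Finset.sum_congr rfl step, Finset.sum_add_distrib, Finset.sum_add_distrib]
  -- first sum: ∑_{j≤r} (r)_{j+1} cc (i+1) (j+1) = TT r (i+1)
  have F1 : ∑ j ∈ Finset.range (r + 1), (r.descFactorial (j+1) : ℚ) * cc (i+1) ((j+1 : ℕ) : ℤ)
      = TT r (i + 1) := by
    rw [Finset.sum_range_succ]
    rw [show (r.descFactorial (r+1) : ℚ) = 0 by
      rw [Nat.descFactorial_eq_zero_iff_lt.mpr (Nat.lt_succ_self r), Nat.cast_zero], zero_mul, add_zero]
    rw [TT, Finset.sum_range_succ']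
    rw [show (r.descFactorial 0 : ℚ) * cc (i+1) ((0:ℕ) : ℤ) = 0 by
      rw [cc_eq_zero_of_lt (by exact_mod_cast Nat.succ_pos i), mul_zero], add_zero]
  -- second sum: ∑_{j≤r} (r)_j cc i (j-1) = ∑_{j≤r} (r-j)(r)_j cc i j
  have F2 : ∑ j ∈ Finset.range (r + 1), (r.descFactorial j : ℚ) * cc i ((j:ℤ) - 1)
      = ∑ j ∈ Finset.range (r + 1), ((r:ℚ) - j) * ((r.descFactorial j : ℚ) * cc i (j : ℤ)) := by
    rw [Finset.sum_range_succ']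
    rw [show (r.descFactorial 0 : ℚ) * cc i (((0:ℕ):ℤ) - 1) = 0 by
      rw [cc_neg (by norm_num), mul_zero], add_zero]
    rw [Finset.sum_range_succ]
    rw [show ((r:ℚ) - (r:ℕ)) * ((r.descFactorial r : ℚ) * cc i ((r:ℕ) : ℤ)) = 0 by
      rw [sub_self, zero_mul], add_zero]
    apply Finset.sum_congr rfl
    intro j _
    have e : ((j + 1 : ℕ) : ℤ) - 1 = (j : ℤ) := by push_cast; ring
    rw [e, desc_succ]
    push_cast
    ring
  rw [F1, F2]
  rw [← Finset.sum_add_distrib]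
  have F3 : ∑ j ∈ Finset.range (r + 1),
      (((r:ℚ) - j) * ((r.descFactorial j : ℚ) * cc i (j : ℤ))
        + ((j:ℚ) - i) * ((r.descFactorial j : ℚ) * cc i (j : ℤ)))
      = ((r : ℚ) - i) * TT r i := by
    rw [TT, Finset.mul_sum]
    apply Finset.sum_congr rfl
    intro j _
    ring
  rw [F3]
  ring

lemma main_sum (s r : ℕ) :
    ∑ i ∈ Finset.range (r + 1), (s.descFactorial (r - i) : ℚ) * TT r i = (s : ℚ) ^ r := by
  induction r with
  | zero => simp [TT_zero]
  | succ r ih =>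
    rw [Finset.sum_range_succ']
    have h0 : (s.descFactorial (r + 1 - 0) : ℚ) * TT (r + 1) 0 = (s.descFactorial (r+1) : ℚ) := by
      rw [Nat.sub_zero, TT_zero, mul_one]
    rw [h0]
    have step : ∀ i ∈ Finset.range (r + 1),
        (s.descFactorial (r + 1 - (i + 1)) : ℚ) * TT (r + 1) (i + 1)
          = ((r:ℚ) - i) * ((s.descFactorial (r - i) : ℚ) * TT r i)
            + (s.descFactorial (r - i) : ℚ) * TT r (i + 1) := by
      intro i _
      rw [Nat.succ_sub_succ, TT_rec]
      ring
    rw [Finset.sum_congr rfl step, Finset.sum_add_distrib]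
    have F2 : ∑ i ∈ Finset.range (r + 1), (s.descFactorial (r - i) : ℚ) * TT r (i + 1)
        = (∑ i ∈ Finset.range (r + 1),
            ((s:ℚ) - ((r:ℚ) - i)) * ((s.descFactorial (r - i) : ℚ) * TT r i))
          - (s.descFactorial (r + 1) : ℚ) := by
      have expand : ∑ i ∈ Finset.range (r + 2), (s.descFactorial (r + 1 - i) : ℚ) * TT r i
          = ∑ i ∈ Finset.range (r + 1), (s.descFactorial (r - i) : ℚ) * TT r (i + 1)
            + (s.descFactorial (r + 1) : ℚ) := by
        rw [Finset.sum_range_succ']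
        congr 1
        · apply Finset.sum_congr rfl
          intro i _
          rw [Nat.succ_sub_succ]
        · rw [Nat.sub_zero, TT_zero, mul_one]
      have expand2 : ∑ i ∈ Finset.range (r + 2), (s.descFactorial (r + 1 - i) : ℚ) * TT r i
          = ∑ i ∈ Finset.range (r + 1),
              ((s:ℚ) - ((r:ℚ) - i)) * ((s.descFactorial (r - i) : ℚ) * TT r i) := by
        rw [Finset.sum_range_succ, TT_eq_zero (Nat.lt_succ_self r), mul_zero, add_zero]
        apply Finset.sum_congr rfl
        intro i hi
        rw [Finset.mem_range] at hi
        have e : r + 1 - i = (r - i) + 1 := by omega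
        rw [e, desc_succ]
        have e2 : ((r - i : ℕ) : ℚ) = (r : ℚ) - i := by
          rw [Nat.cast_sub (by omega)]
        rw [e2]
        ring
      linarith [expand, expand2]
    rw [F2]
    have comb : ∑ i ∈ Finset.range (r + 1),
          ((r:ℚ) - i) * ((s.descFactorial (r - i) : ℚ) * TT r i)
        + ((∑ i ∈ Finset.range (r + 1),
            ((s:ℚ) - ((r:ℚ) - i)) * ((s.descFactorial (r - i) : ℚ) * TT r i))
          - (s.descFactorial (r + 1) : ℚ))
        + (s.descFactorial (r + 1) : ℚ)
        = (s:ℚ) * ∑ i ∈ Finset.range (r + 1), (s.descFactorial (r - i) : ℚ) * TT r i := by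
      have hsum : ∑ i ∈ Finset.range (r + 1),
            ((r:ℚ) - i) * ((s.descFactorial (r - i) : ℚ) * TT r i)
          + ∑ i ∈ Finset.range (r + 1),
            ((s:ℚ) - ((r:ℚ) - i)) * ((s.descFactorial (r - i) : ℚ) * TT r i)
          = ∑ i ∈ Finset.range (r + 1), (s:ℚ) * ((s.descFactorial (r - i) : ℚ) * TT r i) := by
        rw [← Finset.sum_add_distrib]
        apply Finset.sum_congr rfl
        intro i _
        ring
      rw [Finset.mul_sum]
      linarith [hsum]
    rw [comb, ih]
    ring

lemma inner_finsum (i j : ℕ) :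
    (∑ᶠ n : ℕ, phi (n : ℤ) ((i : ℤ) - (n : ℤ)) ((j : ℤ) - 2 * (n : ℤ)))
      = cc i (j : ℤ) := by
  rw [cc]
  apply finsum_eq_finset_sum_of_support_subset
  intro n hn
  simp only [Function.mem_support] at hn
  simp only [Finset.coe_range, Set.mem_Iio]
  by_contra hni
  exact hn (phi_eq_zero (by omega))

lemma outer_finsum (r i : ℕ) :
    (∑ᶠ j : ℕ, (r.descFactorial j : ℚ)
        * ∑ᶠ n : ℕ, phi (n : ℤ) ((i : ℤ) - (n : ℤ)) ((j : ℤ) - 2 * (n : ℤ)))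
      = TT r i := by
  have h : ∀ j : ℕ, (r.descFactorial j : ℚ)
        * (∑ᶠ n : ℕ, phi (n : ℤ) ((i : ℤ) - (n : ℤ)) ((j : ℤ) - 2 * (n : ℤ)))
      = (r.descFactorial j : ℚ) * cc i (j : ℤ) := by
    intro j
    rw [inner_finsum]
  rw [finsum_congr h, TT]
  apply finsum_eq_finset_sum_of_support_subset
  intro j hj
  simp only [Function.mem_support] at hj
  simp only [Finset.coe_range, Set.mem_Iio]
  by_contra hji
  apply hj
  rw [Nat.descFactorial_eq_zero_iff_lt.mpr (by omega), Nat.cast_zero, zero_mul]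

/-- `∑_{i=0}^r (s)_{r-i} · ∑_{j≥0} (r)_j · (∑_{n≥0} φ(n, i-n, j-2n)) = s^r`.
The inner sums are `finsum`s; they have finite support since `φ` vanishes
outside `0 ≤ k ≤ j ≤ n` and `(r)_j = 0` for `j > r`. -/
theorem stmt9 (s r : ℕ) :
    ∑ i ∈ Finset.range (r + 1), (s.descFactorial (r - i) : ℚ)
        * (∑ᶠ j : ℕ, (r.descFactorial j : ℚ)
            * ∑ᶠ n : ℕ, phi (n : ℤ) ((i : ℤ) - (n : ℤ)) ((j : ℤ) - 2 * (n : ℤ)))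
      = (s : ℚ) ^ r := by
  have h : ∀ i ∈ Finset.range (r + 1), (s.descFactorial (r - i) : ℚ)
        * (∑ᶠ j : ℕ, (r.descFactorial j : ℚ)
            * ∑ᶠ n : ℕ, phi (n : ℤ) ((i : ℤ) - (n : ℤ)) ((j : ℤ) - 2 * (n : ℤ)))
      = (s.descFactorial (r - i) : ℚ) * TT r i := by
    intro i _
    rw [outer_finsum]
  rw [Finset.sum_congr rfl h]
  exact main_sum s r
end

section
/- For every natural number n ≥ 1, φ(n, n−1, 0) = 1/(2n)! and φ(n, n, 1) = 1/(2n+1)!. -/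
lemma phiN_high (n j k : ℕ) (h : n < j) : phiN n j k = 0 := by
  cases n with
  | zero => rw [phiN, if_neg]; omega
  | succ m => rw [phiN, if_neg]; omega

lemma phiN_diag0 (m : ℕ) : phiN (m + 1) (m + 1) 0 = 0 := by
  rw [phiN, if_pos (by omega), dif_pos rfl,
    phiN_high m (m + 1) 1 (by omega), phiN_high m (m + 1) 0 (by omega)]
  ring

lemma e100 : phiN 1 0 0 = 1 / 2 := by
  show phiN (0 + 1) 0 0 = 1 / 2
  rw [phiN, if_pos (by omega), dif_pos rfl]
  norm_num
  rw [phiN.eq_1, phiN.eq_1]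
  norm_num

lemma e111 : phiN 1 1 1 = 1 / 6 := by
  show phiN (0 + 1) 1 1 = 1 / 6
  rw [phiN, if_pos (by omega), dif_neg (by omega)]
  norm_num [e100]
  rw [phiN.eq_1, phiN.eq_1]
  norm_num

lemma key_s12 (n : ℕ) (hn : 1 ≤ n) :
    phiN n (n - 1) 0 = 1 / (Nat.factorial (2 * n) : ℚ)
      ∧ phiN n n 1 = 1 / (Nat.factorial (2 * n + 1) : ℚ) := by
  induction n with
  | zero => omega
  | succ m ih =>
    have hpos : ∀ k : ℕ, (Nat.factorial k : ℚ) ≠ 0 := fun k => by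
      exact_mod_cast (Nat.factorial_pos k).ne'
    rcases Nat.lt_or_ge m 1 with h1 | hm
    · have hm0 : m = 0 := by omega
      subst hm0
      refine ⟨?_, ?_⟩
      · show phiN 1 0 0 = _
        rw [e100]; norm_num [Nat.factorial]
      · show phiN 1 1 1 = _
        rw [e111]; norm_num [Nat.factorial]
    · obtain ⟨ih1, ih2⟩ := ih hm
      have hF : ((2 * (m + 1)).factorial : ℚ)
          = (2 * (m : ℚ) + 2) * ((2 * m + 1).factorial : ℚ) := by
        have h : 2 * (m + 1) = (2 * m + 1) + 1 := by ring
        rw [h, Nat.factorial_succ]; push_cast; ring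
      have hdiag : phiN m m 0 = 0 := by
        obtain ⟨p, rfl⟩ : ∃ p, m = p + 1 := ⟨m - 1, by omega⟩
        exact phiN_diag0 p
      have ha : phiN (m + 1) m 0 = 1 / (Nat.factorial (2 * (m + 1)) : ℚ) := by
        rw [phiN, if_pos (by omega), dif_pos rfl, ih2, hdiag, hF]
        have := hpos (2 * m + 1)
        field_simp
        ring
      refine ⟨ha, ?_⟩
      have hG : ((2 * (m + 1) + 1).factorial : ℚ)
          = (2 * (m : ℚ) + 3) * ((2 * (m + 1)).factorial : ℚ) := by
        rw [Nat.factorial_succ]; push_cast; ring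
      rw [phiN, if_pos (by omega), dif_neg (by omega)]
      simp only [Nat.add_sub_cancel, Nat.sub_self]
      rw [ha, phiN_high m (m + 1) 2 (by omega), phiN_high m (m + 1) 1 (by omega), hG]
      have := hpos (2 * (m + 1))
      push_cast
      field_simp
      ring

/-- For `n ≥ 1`: `φ(n, n-1, 0) = 1/(2n)!` and `φ(n, n, 1) = 1/(2n+1)!`. -/
theorem stmt12 (n : ℕ) (hn : 1 ≤ n) :
    phi (n : ℤ) ((n : ℤ) - 1) 0 = 1 / (Nat.factorial (2 * n) : ℚ)
      ∧ phi (n : ℤ) (n : ℤ) 1 = 1 / (Nat.factorial (2 * n + 1) : ℚ) := by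
  have h1 : ((n : ℤ) - 1).toNat = n - 1 := by omega
  have h2 : ((n : ℤ)).toNat = n := by omega
  unfold phi
  rw [if_pos (by refine ⟨by omega, by omega, by omega⟩),
    if_pos (by refine ⟨by omega, by omega, by omega⟩)]
  simp only [h1, h2, Int.toNat_zero, Int.toNat_one]
  exact key_s12 n hn
end

section
/- For all natural numbers n ≥ λ ≥ 0 and every rational number z: Σ_{k=0}^{λ} φ(n, n−λ+k, k) · z^k = Σ_{π ∈ 𝒫_{n,λ}} Π_{k=1}^{n} (1/π(k)!) · f_k(z)^{π(k)}, where f_k(z) := (1/(2k)!)·(1 + z/(2k+1)). -/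
/-- The component functions `f_k(z) = (1/(2k)!)·(1 + z/(2k+1))`. -/
def f (k : ℕ) (z : ℚ) : ℚ := (1 / (Nat.factorial (2 * k) : ℚ)) * (1 + z / (2 * (k : ℚ) + 1))


open Polynomial Finset
noncomputable def fp (k : ℕ) : Polynomial ℚ :=
  C (1 / (Nat.factorial (2*k) : ℚ)) + C (1 / (Nat.factorial (2*k+1) : ℚ)) * X
noncomputable def q : ℕ → ℕ → Polynomial ℚ
  | n, 0 => if n = 0 then 1 else 0
  | n, l+1 => ∑ k ∈ Finset.Icc 1 n, fp k * q (n - k) l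

lemma q_succ (n l : ℕ) : q n (l+1) = ∑ m ∈ range n, fp (m+1) * q (n - (m+1)) l := by
  simp only [q]
  rw [← Finset.Ico_add_one_right_eq_Icc, Finset.sum_Ico_eq_sum_range]
  exact Finset.sum_congr (by norm_num) (fun i _ => by rw [Nat.add_comm 1 i])

lemma q_zero_succ (l : ℕ) : q 0 (l+1) = 0 := by simp [q_succ]

lemma derivative_fp (k : ℕ) : derivative (fp k) = C (1 / (Nat.factorial (2*k+1) : ℚ)) := by
  simp [fp]

lemma fp_key (m : ℕ) :
    C ((2*(m+1) : ℕ) : ℚ) * fp (m+1) + (X + X^2) * derivative (fp (m+1)) - X * fp (m+1)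
      = derivative (fp m) := by
  have e1 : ((2*(m+1)).factorial : ℚ) = (2*(m:ℚ)+2) * ((2*m+1).factorial : ℚ) := by
    have h : 2*(m+1) = (2*m+1)+1 := by ring
    rw [h, Nat.factorial_succ]; push_cast; ring
  have e2 : ((2*(m+1)+1).factorial : ℚ) = (2*(m:ℚ)+3) * ((2*(m+1)).factorial : ℚ) := by
    rw [Nat.factorial_succ]; push_cast; ring
  have f1 : ((2*m+1).factorial : ℚ) ≠ 0 := by positivity
  have f2 : ((2*(m+1)).factorial : ℚ) ≠ 0 := by positivity
  rw [derivative_fp, derivative_fp]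
  have H1 : C ((2*(m+1) : ℕ) : ℚ) * C (1 / ((2*(m+1)).factorial : ℚ))
      = C (1 / ((2*m+1).factorial : ℚ)) := by
    rw [← C_mul]; congr 1
    rw [e1]; push_cast
    have : (2*(m:ℚ)+2) ≠ 0 := by positivity
    field_simp
  have H2 : C ((2*(m+1) : ℕ) : ℚ) * C (1 / ((2*(m+1)+1).factorial : ℚ))
      + C (1 / ((2*(m+1)+1).factorial : ℚ)) - C (1 / ((2*(m+1)).factorial : ℚ)) = 0 := by
    rw [← C_mul, ← C_add, ← C_sub, C_eq_zero]
    rw [e2]; push_cast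
    have h3 : (2*(m:ℚ)+3) ≠ 0 := by positivity
    field_simp; ring
  unfold fp
  linear_combination H1 + X * H2

lemma q_ode0 (l : ℕ) :
    C ((2*0 : ℕ) : ℚ) * q 0 l + (X + X^2) * derivative (q 0 l) - C (l:ℚ) * X * q 0 l = 0 := by
  cases l with
  | zero => simp [q]
  | succ l => simp [q_zero_succ]

lemma q_ode (l : ℕ) : ∀ n : ℕ,
    C ((2*(n+1) : ℕ) : ℚ) * q (n+1) l + (X + X^2) * derivative (q (n+1) l)
      - C (l : ℚ) * X * q (n+1) l
      = derivative (q n l) + C (l : ℚ) * q n (l-1) := by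
  induction l with
  | zero =>
      intro n
      simp [q, apply_ite derivative]
  | succ l IH =>
      intro n
      have hl1 : C (((l+1 : ℕ)) : ℚ) = C (l:ℚ) + 1 := by push_cast; rw [C_add, C_1]
      have hq1 : q (n+1) (l+1) = ∑ m ∈ range (n+1), fp (m+1) * q (n-m) l := by
        rw [q_succ]
        exact Finset.sum_congr rfl fun m _ => by rw [Nat.succ_sub_succ]
      have hd1 : derivative (q (n+1) (l+1))
          = ∑ m ∈ range (n+1),
              (derivative (fp (m+1)) * q (n-m) l + fp (m+1) * derivative (q (n-m) l)) := by
        rw [hq1, derivative_sum]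
        exact Finset.sum_congr rfl fun m _ => derivative_mul
      have hd2 : derivative (q n (l+1))
          = ∑ m ∈ range n,
              (derivative (fp (m+1)) * q (n-(m+1)) l + fp (m+1) * derivative (q (n-(m+1)) l)) := by
        rw [q_succ, derivative_sum]
        exact Finset.sum_congr rfl fun m _ => derivative_mul
      have hsum1 : ∑ m ∈ range (n+1), derivative (fp m) * q (n-m) l
          = q n l + ∑ m ∈ range n, derivative (fp (m+1)) * q (n-(m+1)) l := by
        rw [Finset.sum_range_succ']
        rw [derivative_fp 0]
        norm_num
        exact add_comm _ _
      have hS3 : C (l:ℚ) * (∑ m ∈ range n, fp (m+1) * q (n-(m+1)) (l-1))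
          = C (l:ℚ) * q n l := by
        cases l with
        | zero => simp
        | succ l'' => rw [Nat.succ_sub_one]; rw [← q_succ]
      have hsum2 : ∑ m ∈ range (n+1),
            fp (m+1) * (C ((2*(n-m) : ℕ) : ℚ) * q (n-m) l
              + (X+X^2) * derivative (q (n-m) l) - C (l:ℚ) * X * q (n-m) l)
          = (∑ m ∈ range n, fp (m+1) * derivative (q (n-(m+1)) l)) + C (l:ℚ) * q n l := by
        rw [Finset.sum_range_succ, Nat.sub_self, q_ode0 l, mul_zero, add_zero]
        have step : ∀ m ∈ range n,
            fp (m+1) * (C ((2*(n-m) : ℕ) : ℚ) * q (n-m) l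
              + (X+X^2) * derivative (q (n-m) l) - C (l:ℚ) * X * q (n-m) l)
            = fp (m+1) * derivative (q (n-(m+1)) l)
              + C (l:ℚ) * (fp (m+1) * q (n-(m+1)) (l-1)) := by
          intro m hm
          have h1 : n - m = (n - (m+1)) + 1 := by
            have := Finset.mem_range.mp hm; omega
          rw [h1, IH (n - (m+1))]; ring
        rw [Finset.sum_congr rfl step, Finset.sum_add_distrib, ← Finset.mul_sum, hS3]
      have main : ∑ m ∈ range (n+1),
            (C ((2*(n+1) : ℕ) : ℚ) * (fp (m+1) * q (n-m) l)
              + (X+X^2) * (derivative (fp (m+1)) * q (n-m) l + fp (m+1) * derivative (q (n-m) l))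
              - C (((l+1:ℕ)) : ℚ) * X * (fp (m+1) * q (n-m) l))
          = ∑ m ∈ range (n+1),
            (derivative (fp m) * q (n-m) l
              + fp (m+1) * (C ((2*(n-m) : ℕ) : ℚ) * q (n-m) l
                + (X+X^2) * derivative (q (n-m) l) - C (l:ℚ) * X * q (n-m) l)) := by
        refine Finset.sum_congr rfl fun m hm => ?_
        have hmn : m ≤ n := Nat.lt_succ_iff.mp (Finset.mem_range.mp hm)
        have hsplit : C ((2*(n+1) : ℕ) : ℚ) = C ((2*(m+1) : ℕ) : ℚ) + C ((2*(n-m) : ℕ) : ℚ) := by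
          rw [← C_add]; congr 1; push_cast [hmn]; ring
        linear_combination (q (n-m) l) * fp_key m + (fp (m+1) * q (n-m) l) * hsplit
          - (X * (fp (m+1) * q (n-m) l)) * hl1
      calc C ((2*(n+1) : ℕ) : ℚ) * q (n+1) (l+1) + (X + X^2) * derivative (q (n+1) (l+1))
            - C ((l+1 : ℕ) : ℚ) * X * q (n+1) (l+1)
          = ∑ m ∈ range (n+1),
            (C ((2*(n+1) : ℕ) : ℚ) * (fp (m+1) * q (n-m) l)
              + (X+X^2) * (derivative (fp (m+1)) * q (n-m) l + fp (m+1) * derivative (q (n-m) l))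
              - C (((l+1:ℕ)) : ℚ) * X * (fp (m+1) * q (n-m) l)) := by
            rw [hd1, hq1, Finset.mul_sum, Finset.mul_sum, Finset.mul_sum,
              ← Finset.sum_add_distrib, ← Finset.sum_sub_distrib]
        _ = ∑ m ∈ range (n+1),
            (derivative (fp m) * q (n-m) l
              + fp (m+1) * (C ((2*(n-m) : ℕ) : ℚ) * q (n-m) l
                + (X+X^2) * derivative (q (n-m) l) - C (l:ℚ) * X * q (n-m) l)) := main
        _ = derivative (q n (l+1)) + C ((l+1 : ℕ) : ℚ) * q n (l+1-1) := by
            rw [Finset.sum_add_distrib, hsum1, hsum2, hd2, Finset.sum_add_distrib,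
              Nat.add_sub_cancel, hl1]
            ring

lemma q_eq_zero {n l : ℕ} (h : n < l) : q n l = 0 := by
  induction l generalizing n with
  | zero => omega
  | succ l IH =>
      rw [q_succ]
      refine Finset.sum_eq_zero fun m hm => ?_
      have hm' := Finset.mem_range.mp hm
      rw [IH (by omega), mul_zero]

lemma q_coeff_high (l : ℕ) : ∀ n k : ℕ, l < k → (q n l).coeff k = 0 := by
  induction l with
  | zero =>
      intro n k hk
      simp only [q]
      split_ifs <;> simp [Polynomial.coeff_one] <;> omega
  | succ l IH =>
      intro n k hk
      rw [q_succ, Polynomial.finset_sum_coeff]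
      refine Finset.sum_eq_zero fun m hm => ?_
      have hex : fp (m+1) * q (n-(m+1)) l
          = C (1 / (Nat.factorial (2*(m+1)) : ℚ)) * q (n-(m+1)) l
            + C (1 / (Nat.factorial (2*(m+1)+1) : ℚ)) * (q (n-(m+1)) l * X) := by
        unfold fp; ring
      rw [hex, Polynomial.coeff_add, Polynomial.coeff_C_mul, Polynomial.coeff_C_mul]
      obtain ⟨k', rfl⟩ : ∃ k', k = k' + 1 := ⟨k - 1, by omega⟩
      rw [Polynomial.coeff_mul_X, IH _ _ (by omega), IH _ _ (by omega)]
      simp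

lemma q_ode' (l n : ℕ) :
    C ((2*(n+1) : ℕ) : ℚ) * q (n+1) l + derivative (q (n+1) l) * X
        + derivative (q (n+1) l) * X^2 - C (l : ℚ) * (q (n+1) l * X)
      = derivative (q n l) + C (l : ℚ) * q n (l-1) := by
  linear_combination q_ode l n

lemma q_rec0 (n l : ℕ) :
    ((2*(n+1) : ℕ) : ℚ) * (q (n+1) l).coeff 0
      = (q n l).coeff 1 + (l : ℚ) * (q n (l-1)).coeff 0 := by
  have h := congrArg (fun p => Polynomial.coeff p 0) (q_ode' l n)
  simpa [Polynomial.coeff_derivative, Polynomial.coeff_mul_X_pow'] using h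

lemma q_rec_succ (n l k : ℕ) :
    ((2*(n+1)+(k+1) : ℕ) : ℚ) * (q (n+1) l).coeff (k+1)
      = ((l:ℚ) - (k:ℚ)) * (q (n+1) l).coeff k
        + ((k+2 : ℕ) : ℚ) * (q n l).coeff (k+2)
        + (l:ℚ) * (q n (l-1)).coeff (k+1) := by
  have h := congrArg (fun p => Polynomial.coeff p (k+1)) (q_ode' l n)
  simp only [Polynomial.coeff_add, Polynomial.coeff_sub, Polynomial.coeff_C_mul,
    Polynomial.coeff_mul_X, Polynomial.coeff_derivative,
    Polynomial.coeff_mul_X_pow'] at h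
  rcases k with _ | k
  · norm_num at h ⊢
    linarith [h]
  · have h2 : 2 ≤ k + 1 + 1 := by omega
    rw [if_pos h2] at h
    have h3 : k + 1 + 1 - 2 = k := by omega
    rw [h3] at h
    push_cast at h ⊢
    linarith [h]

lemma phiN_out : ∀ {n j k : ℕ}, ¬(k ≤ j ∧ j ≤ n) → phiN n j k = 0 := by
  intro n j k h
  match n with
  | 0 =>
      rw [phiN]
      rw [if_neg]
      rintro ⟨rfl, rfl⟩
      exact h ⟨le_refl 0, le_refl 0⟩
  | n+1 => rw [phiN, if_neg h]

lemma phi_q : ∀ n l k : ℕ, l ≤ n → (l.factorial : ℚ) * phiN n (n - l + k) k = (q n l).coeff k := by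
  intro n
  induction n with
  | zero =>
      intro l k hl
      interval_cases l
      rw [phiN]
      simp only [q]
      rcases k with _ | k <;> simp [Polynomial.coeff_one]
  | succ n IHn =>
      intro l
      have key : ∀ k : ℕ, k ≤ l → l ≤ n+1 → (l.factorial : ℚ) * phiN (n+1) (n+1-l+k) k = (q (n+1) l).coeff k := by
        intro k
        induction k with
        | zero =>
            intro _ hl
            have hT2 : (l.factorial : ℚ) * phiN n (n+1-l+0) 1 = (q n l).coeff 1 := by
              rcases Nat.lt_or_ge l (n+1) with h | h
              · rw [show n+1-l+0 = n-l+1 by omega]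
                exact IHn l 1 (by omega)
              · have hl' : l = n+1 := by omega
                subst hl'
                rw [phiN_out (by omega), q_eq_zero (by omega)]
                simp
            have hT3 : (l.factorial : ℚ) * phiN n (n+1-l+0) 0 = (l:ℚ) * (q n (l-1)).coeff 0 := by
              rcases l with _ | l''
              · rw [phiN_out (by omega)]
                simp
              · rw [show n+1-(l''+1)+0 = n-l''+0 by omega]
                have := IHn l'' 0 (by omega)
                rw [Nat.factorial_succ]
                push_cast
                linear_combination ((l'':ℚ)+1) * this
            have hrec := q_rec0 n l
            push_cast at hrec
            rw [phiN, if_pos (by omega), dif_pos rfl]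
            have hD : 2 * ((n:ℚ) + 1) + ((0:ℕ):ℚ) ≠ 0 := by positivity
            rw [← mul_div_assoc, div_eq_iff hD]
            push_cast
            linear_combination hT2 + hT3 - hrec
        | succ k' IHk =>
            intro hk hl
            have hj1 : n+1-l+(k'+1) - 1 = n+1-l+k' := by omega
            have hT1 : (l.factorial : ℚ) * phiN (n+1) (n+1-l+(k'+1)-1) k' = (q (n+1) l).coeff k' := by
              rw [hj1]; exact IHk (by omega) hl
            have hT2 : (l.factorial : ℚ) * phiN n (n+1-l+k'+1) (k'+1+1) = (q n l).coeff (k'+2) := by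
              rcases Nat.lt_or_ge l (n+1) with h | h
              · rw [show n+1-l+k'+1 = n-l+(k'+2) by omega]
                exact IHn l (k'+2) (by omega)
              · have hl' : l = n+1 := by omega
                subst hl'
                rw [phiN_out (by omega), q_eq_zero (by omega)]
                simp
            have hT3 : (l.factorial : ℚ) * phiN n (n+1-l+(k'+1)) (k'+1)
                = (l:ℚ) * (q n (l-1)).coeff (k'+1) := by
              rcases l with _ | l''
              · exact absurd hk (by omega)
              · rw [show n+1-(l''+1)+(k'+1) = n-l''+(k'+1) by omega]
                have := IHn l'' (k'+1) (by omega)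
                rw [Nat.factorial_succ]
                push_cast
                linear_combination ((l'':ℚ)+1) * this
            have hrec := q_rec_succ n l k'
            push_cast at hrec
            have hcast : ((n+1-l+(k'+1) : ℕ) : ℚ) = (n:ℚ)+1-(l:ℚ)+(k':ℚ)+1 := by
              push_cast [hl]
              ring
            rw [phiN, if_pos (by omega), dif_neg (Nat.succ_ne_zero k')]
            have hD : 2 * ((n:ℚ) + 1) + ((k'+1:ℕ):ℚ) ≠ 0 := by positivity
            rw [← mul_div_assoc, div_eq_iff hD]
            rw [hcast]
            push_cast
            push_cast at hT1 hT2 hT3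
            linear_combination (norm := ring_nf) hT1 * ((l:ℚ) - (k':ℚ)) + hT2 * ((k':ℚ)+2) + hT3 - hrec
      intro k hl
      by_cases hk : k ≤ l
      · exact key k hk hl
      · rw [phiN_out (by omega), q_coeff_high l (n+1) k (by omega), mul_zero]




noncomputable def pw (N : ℕ) (z : ℚ) (s : Multiset ℕ) : ℚ :=
  ∏ j ∈ Finset.Icc 1 N, (1 / (Nat.factorial (Multiset.count j s) : ℚ)) * f j z ^ (Multiset.count j s)

lemma pw_ext {m N : ℕ} (h : m ≤ N) (π : Nat.Partition m) (z : ℚ) :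
    pw m z π.parts = pw N z π.parts := by
  unfold pw
  refine Finset.prod_subset (Finset.Icc_subset_Icc_right h) (fun j hj hnot => ?_)
  have hjm : m < j := by
    have h1 := Finset.mem_Icc.mp hj
    have h2 : ¬(1 ≤ j ∧ j ≤ m) := fun hh => hnot (Finset.mem_Icc.mpr hh)
    omega
  have hcnt : Multiset.count j π.parts = 0 := by
    rw [Multiset.count_eq_zero]
    intro hmem
    have := Multiset.le_sum_of_mem hmem
    rw [π.parts_sum] at this
    omega
  simp [hcnt]

def insertP (n k : ℕ) (hk1 : 1 ≤ k) (hkn : k ≤ n) (π : Nat.Partition (n-k)) : Nat.Partition n where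
  parts := k ::ₘ π.parts
  parts_pos := by
    intro i hi
    rcases Multiset.mem_cons.mp hi with rfl | h
    · exact hk1
    · exact π.parts_pos h
  parts_sum := by rw [Multiset.sum_cons, π.parts_sum]; omega

def eraseP (n k : ℕ) (π : Nat.Partition n) (hk : k ∈ π.parts) : Nat.Partition (n-k) where
  parts := π.parts.erase k
  parts_pos := fun h => π.parts_pos (Multiset.mem_of_mem_erase h)
  parts_sum := by
    have h1 : k + (π.parts.erase k).sum = n := by
      rw [← Multiset.sum_cons, Multiset.cons_erase hk, π.parts_sum]
    omega

lemma pw_insert (n k : ℕ) (hk : k ∈ Finset.Icc 1 n) (z : ℚ) (s : Multiset ℕ) :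
    f k z * pw n z s = ((Multiset.count k (k ::ₘ s) : ℕ) : ℚ) * pw n z (k ::ₘ s) := by
  unfold pw
  rw [← Finset.mul_prod_erase _ _ hk, ← Finset.mul_prod_erase _ _ hk]
  have hP : (∏ j ∈ (Finset.Icc 1 n).erase k,
        (1 / (Nat.factorial (Multiset.count j (k ::ₘ s)) : ℚ) * f j z ^ (Multiset.count j (k ::ₘ s))))
      = ∏ j ∈ (Finset.Icc 1 n).erase k,
        (1 / (Nat.factorial (Multiset.count j s) : ℚ) * f j z ^ (Multiset.count j s)) :=
    Finset.prod_congr rfl (fun j hj => by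
      rw [Multiset.count_cons_of_ne (Finset.ne_of_mem_erase hj) s])
  rw [hP, Multiset.count_cons_self]
  set c := Multiset.count k s with hc
  have hfac : (((c+1).factorial : ℕ) : ℚ) = ((c:ℚ)+1) * (c.factorial : ℚ) := by
    rw [Nat.factorial_succ]; push_cast; ring
  have hcne : ((c.factorial : ℕ) : ℚ) ≠ 0 := by positivity
  have h1 : ((c:ℚ)+1) ≠ 0 := by positivity
  have key : f k z * ((1:ℚ)/(c.factorial : ℚ) * f k z ^ c)
      = ((c:ℚ)+1) * ((1:ℚ)/(((c+1).factorial : ℕ) : ℚ) * f k z ^ (c+1)) := by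
    rw [hfac]; field_simp; ring
  push_cast
  linear_combination (∏ j ∈ (Finset.Icc 1 n).erase k,
    (1 / (Nat.factorial (Multiset.count j s) : ℚ) * f j z ^ (Multiset.count j s))) * key

lemma part_step (n l : ℕ) (z : ℚ) :
    ∑ k ∈ Finset.Icc 1 n, f k z *
        (∑ π ∈ Finset.univ.filter (fun π : Nat.Partition (n-k) => Multiset.card π.parts = l),
          pw n z π.parts)
      = ((l:ℚ)+1) *
        ∑ π ∈ Finset.univ.filter (fun π : Nat.Partition n => Multiset.card π.parts = l+1),
          pw n z π.parts := by
  classical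
  have step1 : ∑ k ∈ Finset.Icc 1 n, f k z *
        (∑ π ∈ Finset.univ.filter (fun π : Nat.Partition (n-k) => Multiset.card π.parts = l),
          pw n z π.parts)
      = ∑ p ∈ (Finset.Icc 1 n).sigma
          (fun k => Finset.univ.filter (fun π : Nat.Partition (n-k) => Multiset.card π.parts = l)),
          f p.1 z * pw n z p.2.parts := by
    rw [Finset.sum_sigma]
    exact Finset.sum_congr rfl fun k _ => Finset.mul_sum _ _ _
  rw [step1]
  have step2 : ∑ p ∈ (Finset.Icc 1 n).sigma
          (fun k => Finset.univ.filter (fun π : Nat.Partition (n-k) => Multiset.card π.parts = l)),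
          f p.1 z * pw n z p.2.parts
      = ∑ b ∈ (Finset.univ.filter
            (fun π : Nat.Partition n => Multiset.card π.parts = l+1)).sigma
          (fun π => π.parts.toFinset),
          ((Multiset.count b.2 b.1.parts : ℕ) : ℚ) * pw n z b.1.parts := by
    refine Finset.sum_bij'
      (fun p hp => ⟨insertP n p.1
          (Finset.mem_Icc.mp (Finset.mem_sigma.mp hp).1).1
          (Finset.mem_Icc.mp (Finset.mem_sigma.mp hp).1).2 p.2, p.1⟩)
      (fun b hb => ⟨b.2, eraseP n b.2 b.1
          (Multiset.mem_toFinset.mp (Finset.mem_sigma.mp hb).2)⟩)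
      ?_ ?_ ?_ ?_ ?_
    · -- hi
      intro p hp
      rw [Finset.mem_sigma]
      constructor
      · rw [Finset.mem_filter]
        refine ⟨Finset.mem_univ _, ?_⟩
        have hcard := (Finset.mem_filter.mp (Finset.mem_sigma.mp hp).2).2
        show Multiset.card (p.1 ::ₘ p.2.parts) = l + 1
        rw [Multiset.card_cons, hcard]
      · show p.1 ∈ (p.1 ::ₘ p.2.parts).toFinset
        rw [Multiset.mem_toFinset]
        exact Multiset.mem_cons_self _ _
    · -- hj
      intro b hb
      have hmem := Multiset.mem_toFinset.mp (Finset.mem_sigma.mp hb).2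
      rw [Finset.mem_sigma]
      constructor
      · rw [Finset.mem_Icc]
        refine ⟨b.1.parts_pos hmem, ?_⟩
        have := Multiset.le_sum_of_mem hmem
        rw [b.1.parts_sum] at this
        exact this
      · rw [Finset.mem_filter]
        refine ⟨Finset.mem_univ _, ?_⟩
        have hcard := (Finset.mem_filter.mp (Finset.mem_sigma.mp hb).1).2
        show Multiset.card (b.1.parts.erase b.2) = l
        rw [Multiset.card_erase_of_mem hmem, hcard]
        rfl
    · -- left inverse
      rintro ⟨k, π'⟩ hp
      refine Sigma.ext rfl (heq_of_eq ?_)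
      apply Nat.Partition.ext
      show (k ::ₘ π'.parts).erase k = π'.parts
      exact Multiset.erase_cons_head _ _
    · -- right inverse
      rintro ⟨π, k⟩ hb
      have hmem := Multiset.mem_toFinset.mp (Finset.mem_sigma.mp hb).2
      refine Sigma.ext ?_ HEq.rfl
      · apply Nat.Partition.ext
        show k ::ₘ π.parts.erase k = π.parts
        exact Multiset.cons_erase hmem
    · -- values
      rintro ⟨k, π'⟩ hp
      have hk : k ∈ Finset.Icc 1 n := (Finset.mem_sigma.mp hp).1
      show f k z * pw n z π'.parts
          = ((Multiset.count k (k ::ₘ π'.parts) : ℕ) : ℚ) * pw n z (k ::ₘ π'.parts)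
      exact pw_insert n k hk z π'.parts
  rw [step2, Finset.sum_sigma]
  rw [Finset.mul_sum]
  refine Finset.sum_congr rfl fun π hπ => ?_
  have hcard := (Finset.mem_filter.mp hπ).2
  dsimp only
  rw [← Finset.sum_mul, ← Nat.cast_sum, Multiset.toFinset_sum_count_eq, hcard]
  push_cast
  ring


lemma eval_fp (k : ℕ) (z : ℚ) : (fp k).eval z = f k z := by
  have hfac : ((2*k+1).factorial : ℚ) = (2*(k:ℚ)+1) * ((2*k).factorial : ℚ) := by
    rw [Nat.factorial_succ]; push_cast; ring
  have h1 : ((2*k).factorial : ℚ) ≠ 0 := by positivity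
  have h2 : (2*(k:ℚ)+1) ≠ 0 := by positivity
  simp [fp, f, hfac]
  field_simp

lemma part_q (l : ℕ) : ∀ (n : ℕ) (z : ℚ),
    (l.factorial : ℚ) *
      (∑ π ∈ Finset.univ.filter (fun π : Nat.Partition n => Multiset.card π.parts = l),
        pw n z π.parts)
    = (q n l).eval z := by
  induction l with
  | zero =>
      intro n z
      rcases n with _ | n
      · have huniv : (Finset.univ.filter
            (fun π : Nat.Partition 0 => Multiset.card π.parts = 0)) = Finset.univ := by
          refine Finset.filter_true_of_mem fun π _ => ?_
          simp [π.partition_zero_parts]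
        rw [huniv]
        simp [q, pw]
      · have hempty : (Finset.univ.filter
            (fun π : Nat.Partition (n+1) => Multiset.card π.parts = 0)) = ∅ := by
          refine Finset.filter_eq_empty_iff.mpr fun {π} _ => ?_
          intro hcard
          have h0 : π.parts = 0 := Multiset.card_eq_zero.mp hcard
          have := π.parts_sum
          rw [h0] at this
          simp at this
        rw [hempty]
        simp [q]
  | succ l IH =>
      intro n z
      have hq : (q n (l+1)).eval z = ∑ k ∈ Finset.Icc 1 n, f k z * (q (n-k) l).eval z := by
        simp only [q]
        rw [Polynomial.eval_finset_sum]
        exact Finset.sum_congr rfl fun k _ => by rw [Polynomial.eval_mul, eval_fp]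
      rw [hq]
      have hstep := part_step n l z
      calc ((l+1).factorial : ℚ) *
            ∑ π ∈ Finset.univ.filter
              (fun π : Nat.Partition n => Multiset.card π.parts = l+1), pw n z π.parts
          = (l.factorial : ℚ) * (((l:ℚ)+1) *
              ∑ π ∈ Finset.univ.filter
                (fun π : Nat.Partition n => Multiset.card π.parts = l+1), pw n z π.parts) := by
            rw [Nat.factorial_succ]; push_cast; ring
        _ = (l.factorial : ℚ) * ∑ k ∈ Finset.Icc 1 n, f k z *
              (∑ π ∈ Finset.univ.filter
                (fun π : Nat.Partition (n-k) => Multiset.card π.parts = l),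
                pw n z π.parts) := by rw [← hstep]
        _ = ∑ k ∈ Finset.Icc 1 n, f k z * (q (n-k) l).eval z := by
            rw [Finset.mul_sum]
            refine Finset.sum_congr rfl fun k hk => ?_
            rw [← IH (n-k) z]
            have hext : ∑ π ∈ Finset.univ.filter
                  (fun π : Nat.Partition (n-k) => Multiset.card π.parts = l),
                  pw n z π.parts
                = ∑ π ∈ Finset.univ.filter
                  (fun π : Nat.Partition (n-k) => Multiset.card π.parts = l),
                  pw (n-k) z π.parts :=
              Finset.sum_congr rfl fun π _ => (pw_ext (Nat.sub_le n k) π z).symm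
            rw [hext]
            ring


/-- The generating function identity: for `n ≥ λ ≥ 0`,
`∑_{k=0}^{λ} φ(n, n-λ+k, k)·z^k = ∑_{π ∈ 𝒫_{n,λ}} ∏_{k=1}^{n} (1/π(k)!)·f_k(z)^{π(k)}`,
where `𝒫_{n,λ}` is the set of partitions of `n` with `λ` parts and `π(k)` is the
frequency (multiplicity) of the part `k` in `π`. -/
theorem stmt16 (n l : ℕ) (hl : l ≤ n) (z : ℚ) :
    ∑ k ∈ Finset.range (l + 1), phi (n : ℤ) ((n : ℤ) - (l : ℤ) + (k : ℤ)) (k : ℤ) * z ^ k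
      = ∑ π ∈ Finset.univ.filter (fun π : Nat.Partition n => Multiset.card π.parts = l),
          ∏ k ∈ Finset.Icc 1 n,
            (1 / (Nat.factorial (Multiset.count k π.parts) : ℚ))
              * f k z ^ (Multiset.count k π.parts) := by
  have hfl : (l.factorial : ℚ) ≠ 0 := by positivity
  have hdeg : (q n l).natDegree < l + 1 :=
    Nat.lt_succ_of_le (Polynomial.natDegree_le_iff_coeff_eq_zero.mpr
      (fun N hN => q_coeff_high l n N hN))
  have heval := Polynomial.eval_eq_sum_range' hdeg z
  have hterm : ∀ k ∈ Finset.range (l+1),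
      phi (n:ℤ) ((n:ℤ)-(l:ℤ)+(k:ℤ)) (k:ℤ) * z^k
        = ((q n l).coeff k * z^k) / (l.factorial : ℚ) := by
    intro k hk
    have hcond : (0:ℤ) ≤ (n:ℤ) ∧ (0:ℤ) ≤ (n:ℤ)-(l:ℤ)+(k:ℤ) ∧ (0:ℤ) ≤ (k:ℤ) :=
      ⟨Int.natCast_nonneg n, by omega, Int.natCast_nonneg k⟩
    rw [phi, if_pos hcond]
    have h1 : ((n:ℤ)).toNat = n := Int.toNat_natCast n
    have h2 : ((n:ℤ)-(l:ℤ)+(k:ℤ)).toNat = n - l + k := by omega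
    have h3 : ((k:ℤ)).toNat = k := Int.toNat_natCast k
    rw [h1, h2, h3]
    have hphi : phiN n (n-l+k) k = (q n l).coeff k / (l.factorial : ℚ) := by
      rw [eq_div_iff hfl]
      linear_combination phi_q n l k hl
    rw [hphi]
    ring
  have hR := part_q l n z
  calc ∑ k ∈ Finset.range (l + 1), phi (n : ℤ) ((n : ℤ) - (l : ℤ) + (k : ℤ)) (k : ℤ) * z ^ k
      = ∑ k ∈ Finset.range (l+1), ((q n l).coeff k * z^k) / (l.factorial : ℚ) :=
        Finset.sum_congr rfl hterm
    _ = (q n l).eval z / (l.factorial : ℚ) := by rw [← Finset.sum_div, ← heval]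
    _ = ∑ π ∈ Finset.univ.filter (fun π : Nat.Partition n => Multiset.card π.parts = l),
          pw n z π.parts := by
        rw [← hR]
        field_simp
end
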